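/- arXiv:0904.3086 — 5 statements merged into one kernel-verified Lean document; each statement's English description precedes it below -/
import Mathlib

section
/- Let n ≥ 2 and 1 ≤ l ≤ m ≤ n/2. For each l-element subset i of {1,...,n}, define the function η_i on m-element subsets of {1,...,n} by η_i(k) = 1 if i ⊆ k and η_i(k) = 0 otherwise. Then the family {η_i : i an l-subset of {1,...,n}} is linearly independent in the space of complex-valued functions on m-subsets of {1,...,n}. -/
open Finset

/-- `V^{(n-m,m)}`: the `m`-element subsets of `{1,...,n}`. -/
abbrev VSet (n m : ℕ) : Type := {s : Finset (Fin n) // s.card = m}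

/-- Pointwise action of a permutation on an `m`-subset. -/
def permSub {n m : ℕ} (x : Equiv.Perm (Fin n)) (k : VSet n m) : VSet n m :=
  ⟨k.1.image x, by rw [Finset.card_image_of_injective _ x.injective]; exact k.2⟩

/-- Action of `S_n` on functions on `m`-subsets: `(x·f)(k) = f(x⁻¹·k)`. -/
def permAct {n m : ℕ} (x : Equiv.Perm (Fin n)) (f : VSet n m → ℂ) : VSet n m → ℂ :=
  fun k => f (permSub x⁻¹ k)

/-- Indicator function `𝟙_j` of an `m`-subset `j`. -/
def indic {n m : ℕ} (j : VSet n m) : VSet n m → ℂ := fun k => if k = j then 1 else 0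

/-- The subset `{1,...,m}` of `{1,...,n}` (as the first `m` elements of `Fin n`). -/
def firstSet (n m : ℕ) (h : m ≤ n) : VSet n m :=
  ⟨(Finset.range m).attachFin (fun a ha => lt_of_lt_of_le (Finset.mem_range.mp ha) h),
   by rw [Finset.card_attachFin, Finset.card_range]⟩

/-- Expectation of `g(X)` for a uniformly random permutation `X` of `{1,...,n}`. -/
noncomputable def Eperm (n : ℕ) (g : Equiv.Perm (Fin n) → ℂ) : ℂ :=
  (∑ x : Equiv.Perm (Fin n), g x) / (Nat.factorial n : ℂ)

/-- `η_i(k) = 1` if the `l`-subset `i` is contained in the `m`-subset `k`, else `0`. -/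
def eta {n : ℕ} (l m : ℕ) (i : VSet n l) : VSet n m → ℂ :=
  fun k => if i.1 ⊆ k.1 then 1 else 0


section Aux

variable {n : ℕ}

/-- The "up" operator on functions on subsets of `Fin n`. -/
noncomputable def Uop (f : Finset (Fin n) → ℂ) : Finset (Fin n) → ℂ :=
  fun t => ∑ y ∈ t, f (t.erase y)

/-- The "down" operator on functions on subsets of `Fin n`. -/
noncomputable def Dop (f : Finset (Fin n) → ℂ) : Finset (Fin n) → ℂ :=
  fun s => ∑ x ∈ sᶜ, f (insert x s)

lemma adj (j : ℕ) (f g : Finset (Fin n) → ℂ) :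
    ∑ t ∈ Finset.univ.powersetCard (j+1), Uop f t * g t
      = ∑ s ∈ Finset.univ.powersetCard j, f s * Dop g s := by
  unfold Uop Dop
  simp_rw [Finset.sum_mul, Finset.mul_sum]
  rw [Finset.sum_sigma' (Finset.univ.powersetCard (j+1)) (fun t => t)
      (fun t y => f (t.erase y) * g t),
    Finset.sum_sigma' (Finset.univ.powersetCard j) (fun s => sᶜ)
      (fun s x => f s * g (insert x s))]
  apply Finset.sum_nbij' (fun p => (⟨p.1.erase p.2, p.2⟩ : Σ _ : Finset (Fin n), Fin n))
    (fun p => (⟨insert p.2 p.1, p.2⟩ : Σ _ : Finset (Fin n), Fin n))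
  · rintro ⟨t, y⟩ hp
    simp only [Finset.mem_sigma, Finset.mem_powersetCard_univ] at hp ⊢
    exact ⟨by rw [Finset.card_erase_of_mem hp.2, hp.1]; rfl,
      by simp [Finset.mem_compl]⟩
  · rintro ⟨s, x⟩ hp
    simp only [Finset.mem_sigma, Finset.mem_powersetCard_univ, Finset.mem_compl] at hp ⊢
    exact ⟨by rw [Finset.card_insert_of_notMem hp.2, hp.1], Finset.mem_insert_self _ _⟩
  · rintro ⟨t, y⟩ hp
    simp only [Finset.mem_sigma, Finset.mem_powersetCard_univ] at hp
    simp [Finset.insert_erase hp.2]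
  · rintro ⟨s, x⟩ hp
    simp only [Finset.mem_sigma, Finset.mem_powersetCard_univ, Finset.mem_compl] at hp
    simp [Finset.erase_insert hp.2]
  · rintro ⟨t, y⟩ hp
    simp only [Finset.mem_sigma, Finset.mem_powersetCard_univ] at hp
    simp [Finset.insert_erase hp.2]

lemma comm_lem (f : Finset (Fin n) → ℂ) (s : Finset (Fin n)) :
    Dop (Uop f) s = Uop (Dop f) s + ((n : ℂ) - 2 * s.card) * f s := by
  unfold Uop Dop
  have hD : ∀ x ∈ sᶜ, ∑ y ∈ insert x s, f ((insert x s).erase y)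
      = f s + ∑ y ∈ s, f (insert x (s.erase y)) := by
    intro x hx
    rw [Finset.mem_compl] at hx
    rw [Finset.sum_insert hx, Finset.erase_insert hx]
    congr 1
    apply Finset.sum_congr rfl
    intro y hy
    rw [Finset.erase_insert_of_ne (by rintro rfl; exact hx hy)]
  have hU : ∀ y ∈ s, ∑ x ∈ (s.erase y)ᶜ, f (insert x (s.erase y))
      = f s + ∑ x ∈ sᶜ, f (insert x (s.erase y)) := by
    intro y hy
    have : (s.erase y)ᶜ = insert y sᶜ := by
      ext a; simp [Finset.mem_erase, Finset.mem_compl]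
    rw [this, Finset.sum_insert (by simp [hy]), Finset.insert_erase hy]
  rw [Finset.sum_congr rfl hD, Finset.sum_congr rfl hU, Finset.sum_add_distrib,
    Finset.sum_add_distrib, Finset.sum_const, Finset.sum_const, Finset.sum_comm]
  have hcard : sᶜ.card = n - s.card := by
    rw [Finset.card_compl, Fintype.card_fin]
  have hle : s.card ≤ n := by
    simpa using Finset.card_le_card (Finset.subset_univ s)
  rw [hcard, nsmul_eq_mul, nsmul_eq_mul, Nat.cast_sub hle]
  ring

lemma U_inj (j : ℕ) (hj : 2 * j < n) (f : Finset (Fin n) → ℂ)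
    (hU : ∀ t : Finset (Fin n), t.card = j + 1 → Uop f t = 0) :
    ∀ s : Finset (Fin n), s.card = j → f s = 0 := by
  set F : Finset (Fin n) → ℂ := fun s => (starRingEnd ℂ) (f s) with hF
  have hDF : ∀ r, Dop F r = (starRingEnd ℂ) (Dop f r) := by
    intro r; simp [Dop, hF, map_sum]
  have h0 : (0 : ℂ) = ∑ t ∈ Finset.univ.powersetCard (j+1), Uop F t * Uop f t := by
    rw [Finset.sum_eq_zero]
    intro t ht
    rw [hU t (Finset.mem_powersetCard_univ.mp ht), mul_zero]
  rw [adj j F (Uop f)] at h0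
  have h1 : ∑ s ∈ Finset.univ.powersetCard j, F s * Dop (Uop f) s
      = ∑ s ∈ Finset.univ.powersetCard j, F s * Uop (Dop f) s
        + ((n : ℂ) - 2 * j) * ∑ s ∈ Finset.univ.powersetCard j, F s * f s := by
    rw [Finset.mul_sum, ← Finset.sum_add_distrib]
    apply Finset.sum_congr rfl
    intro s hs
    rw [comm_lem f s, Finset.mem_powersetCard_univ.mp hs]
    ring
  rw [h1] at h0
  obtain ⟨b, hb0, hb⟩ : ∃ b : ℝ, 0 ≤ b ∧
      ∑ s ∈ Finset.univ.powersetCard j, F s * Uop (Dop f) s = (b : ℂ) := by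
    cases j with
    | zero => exact ⟨0, le_refl _, by simp [Uop, Finset.powersetCard_zero]⟩
    | succ j' =>
      refine ⟨∑ r ∈ Finset.univ.powersetCard j', Complex.normSq (Dop f r),
        Finset.sum_nonneg (fun _ _ => Complex.normSq_nonneg _), ?_⟩
      rw [show ∑ s ∈ Finset.univ.powersetCard (j'+1), F s * Uop (Dop f) s
          = ∑ s ∈ Finset.univ.powersetCard (j'+1), Uop (Dop f) s * F s from
          Finset.sum_congr rfl (fun s _ => mul_comm _ _), adj j' (Dop f) F]
      push_cast
      exact Finset.sum_congr rfl (fun r _ => by rw [hDF, Complex.mul_conj])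
  have hT : ∑ s ∈ Finset.univ.powersetCard j, F s * f s
      = ((∑ s ∈ Finset.univ.powersetCard j, Complex.normSq (f s) : ℝ) : ℂ) := by
    push_cast
    exact Finset.sum_congr rfl (fun s _ => by rw [hF]; simp [mul_comm, Complex.mul_conj])
  set T : ℝ := ∑ s ∈ Finset.univ.powersetCard j, Complex.normSq (f s) with hT'
  have hT0 : 0 ≤ T := Finset.sum_nonneg (fun _ _ => Complex.normSq_nonneg _)
  rw [hb, hT] at h0
  have hcast : ((n : ℂ) - 2 * j) = (((n : ℝ) - 2 * j : ℝ) : ℂ) := by push_cast; ring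
  rw [hcast, ← Complex.ofReal_mul, ← Complex.ofReal_add] at h0
  have hreal : b + ((n : ℝ) - 2 * j) * T = 0 := by exact_mod_cast h0.symm
  have hc : (0 : ℝ) < (n : ℝ) - 2 * j := by
    have : (2 * j : ℝ) < n := by exact_mod_cast hj
    linarith
  have hTzero : T = 0 := by nlinarith
  intro s hs
  have := (Finset.sum_eq_zero_iff_of_nonneg
    (fun s _ => Complex.normSq_nonneg (f s))).mp hTzero s
    (Finset.mem_powersetCard_univ.mpr hs)
  exact Complex.normSq_eq_zero.mp this

/-- The linear combination `∑ c_i η_i`, as a function on all subsets. -/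
noncomputable def gfun (l : ℕ) (C : Finset (Fin n) → ℂ) : Finset (Fin n) → ℂ :=
  fun s => ∑ i ∈ Finset.univ.powersetCard l, if i ⊆ s then C i else 0

lemma eigen (l : ℕ) (C : Finset (Fin n) → ℂ) (t : Finset (Fin n)) :
    Uop (gfun l C) t = ((t.card - l : ℕ) : ℂ) * gfun l C t := by
  unfold Uop gfun
  rw [Finset.sum_comm, Finset.mul_sum]
  apply Finset.sum_congr rfl
  intro i hi
  have hci : i.card = l := Finset.mem_powersetCard_univ.mp hi
  by_cases h : i ⊆ t
  · rw [if_pos h]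
    have step : ∀ y ∈ t, (if i ⊆ t.erase y then C i else 0)
        = if y ∈ t \ i then C i else 0 := by
      intro y hy
      simp [Finset.subset_erase, Finset.mem_sdiff, h, hy]
    rw [Finset.sum_congr rfl step, Finset.sum_ite_mem,
      Finset.inter_eq_right.mpr (Finset.sdiff_subset), Finset.sum_const,
      Finset.card_sdiff_of_subset h, hci, nsmul_eq_mul]
  · rw [if_neg h, mul_zero]
    apply Finset.sum_eq_zero
    intro y hy
    rw [if_neg (fun hsub => h (hsub.trans (Finset.erase_subset y t)))]

lemma vanish (l : ℕ) (C : Finset (Fin n) → ℂ) :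
    ∀ m : ℕ, l ≤ m → 2 * m ≤ n →
    (∀ k : Finset (Fin n), k.card = m → gfun l C k = 0) →
    ∀ s : Finset (Fin n), s.card = l → gfun l C s = 0 := by
  intro m
  induction m with
  | zero => intro hl _ h s hs; exact h s (by omega)
  | succ m ih =>
    intro hl hm h s hs
    rcases Nat.eq_or_lt_of_le hl with heq | hlt
    · exact h s (by omega)
    · refine ih (by omega) (by omega) ?_ s hs
      intro k hk
      refine U_inj m (by omega) (gfun l C) ?_ k hk
      intro t ht
      rw [eigen, h t ht, mul_zero]

end Aux

/-- The family `{η_i : i an l-subset of {1,...,n}}` is linearly independent in the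
space of complex-valued functions on `m`-subsets of `{1,...,n}`. -/
theorem eta_linearIndependent (n l m : ℕ) (hn : 2 ≤ n) (hl : 1 ≤ l) (hlm : l ≤ m)
    (hm : 2 * m ≤ n) :
    LinearIndependent ℂ (fun i : VSet n l => eta l m i) := by
  rw [Fintype.linearIndependent_iff]
  intro c hc i
  set C : Finset (Fin n) → ℂ := fun s => if h : s.card = l then c ⟨s, h⟩ else 0 with hC
  have hCi : ∀ i : VSet n l, C i.1 = c i := by
    intro i
    rw [hC]
    simp only [i.2, dif_pos]
  have hg : ∀ k : Finset (Fin n), k.card = m → gfun l C k = 0 := by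
    intro k hk
    have hck := congrFun hc ⟨k, hk⟩
    simp only [Finset.sum_apply, Pi.smul_apply, Pi.zero_apply, smul_eq_mul] at hck
    rw [gfun, Finset.sum_subtype (Finset.univ.powersetCard l)
      (fun s => Finset.mem_powersetCard_univ) (fun s => if s ⊆ k then C s else 0)]
    rw [show (∑ a : VSet n l, if (a : Finset (Fin n)) ⊆ k then C a.1 else 0)
        = ∑ x : VSet n l, c x * eta l m x ⟨k, hk⟩ from
      Finset.sum_congr rfl (fun a _ => by
        rw [eta]; simp only [mul_ite, mul_one, mul_zero, hCi a])]
    exact hck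
  have hvan := vanish l C m hlm hm hg i.1 i.2
  have heq : gfun l C i.1 = c i := by
    rw [gfun, ← hCi i]
    have this1 : ∀ j ∈ Finset.univ.powersetCard l,
        (if j ⊆ i.1 then C j else 0) = if j = i.1 then C i.1 else 0 := by
      intro j hj
      by_cases he : j = i.1
      · simp [he]
      · rw [if_neg he, if_neg]
        intro hsub
        exact he (Finset.eq_of_subset_of_card_le hsub
          (by rw [i.2, Finset.mem_powersetCard_univ.mp hj]))
    rw [Finset.sum_congr rfl this1, Finset.sum_ite_eq',
      if_pos (Finset.mem_powersetCard_univ.mpr i.2)]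
  rw [← heq]; exact hvan
end

section
/- Let n ≥ 2 and 1 ≤ l < l' ≤ m ≤ n/2. Let φ be a function on l-element subsets of {1,...,n} and ψ a function on l'-element subsets, each completely degenerate (i.e., for every subset j of size l-1, ∑_{a ∉ j} φ(j ∪ {a}) = 0, and similarly for ψ with subsets of size l'-1). Define f(k) = ∑_{i ⊆ k, |i|=l} φ(i) and h(k) = ∑_{i ⊆ k, |i|=l'} ψ(i) on m-subsets k. Then, with X a uniform random permutation and X_{(m)} = {X(1),...,X(m)}, one has E[f(X_{(m)}) · conj(h(X_{(m)}))] = 0; equivalently, C(n,m)^{-1} ∑_{k} f(k) conj(h(k)) = 0, summing over all m-subsets k of {1,...,n}. -/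
open Finset

/-- Complete degeneracy of a symmetric kernel `φ` of order `l`: for every
`(l-1)`-subset `j` of `{1,...,n}`, `∑_{a ∉ j} φ(j ∪ {a}) = 0`. -/
def degenKer (n l : ℕ) (φ : Finset (Fin n) → ℂ) : Prop :=
  ∀ j : Finset (Fin n), j.card = l - 1 → ∑ a ∈ jᶜ, φ (insert a j) = 0

section Aux

variable {n : ℕ}

private lemma count_lemma {l' t : ℕ} (i i' : Finset (Fin n)) (hc : i'.card = l') :
    (i'.filter (fun a => ((i'.erase a) ∩ i).card = t)).card
      = (if (i' ∩ i).card = t then l' - t else 0)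
        + (if (i' ∩ i).card = t + 1 then t + 1 else 0) := by
  have key : ∀ a ∈ i', ((i'.erase a) ∩ i).card
      = if a ∈ i then (i' ∩ i).card - 1 else (i' ∩ i).card := by
    intro a ha
    rw [Finset.erase_inter]
    by_cases h : a ∈ i
    · rw [if_pos h, Finset.card_erase_of_mem (Finset.mem_inter.2 ⟨ha, h⟩)]
    · rw [if_neg h, Finset.erase_eq_of_notMem]
      intro hmem; exact h (Finset.mem_inter.1 hmem).2
  by_cases h1 : (i' ∩ i).card = t
  · rw [if_pos h1, if_neg (by omega)]
    have hset : i'.filter (fun a => ((i'.erase a) ∩ i).card = t) = i' \ i := by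
      ext a
      simp only [mem_filter, mem_sdiff]
      constructor
      · rintro ⟨ha, hcard⟩
        refine ⟨ha, fun hai => ?_⟩
        rw [key a ha, if_pos hai] at hcard
        have hc1 : 0 < (i' ∩ i).card :=
          Finset.card_pos.2 ⟨a, Finset.mem_inter.2 ⟨ha, hai⟩⟩
        omega
      · rintro ⟨ha, hai⟩
        refine ⟨ha, ?_⟩
        rw [key a ha, if_neg hai, h1]
    have hsd := Finset.card_sdiff_add_card_inter i' i
    rw [hset]
    omega
  · rw [if_neg h1]
    by_cases h2 : (i' ∩ i).card = t + 1
    · rw [if_pos h2]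
      have hset : i'.filter (fun a => ((i'.erase a) ∩ i).card = t) = i' ∩ i := by
        ext a
        simp only [mem_filter, mem_inter]
        constructor
        · rintro ⟨ha, hcard⟩
          refine ⟨ha, ?_⟩
          by_contra hai
          rw [key a ha, if_neg hai] at hcard
          omega
        · rintro ⟨ha, hai⟩
          refine ⟨ha, ?_⟩
          rw [key a ha, if_pos hai]; omega
      rw [hset, h2]
      omega
    · rw [if_neg h2]
      have hset : i'.filter (fun a => ((i'.erase a) ∩ i).card = t) = ∅ := by
        rw [Finset.filter_eq_empty_iff]
        intro a ha hcard
        rw [key a ha] at hcard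
        by_cases hai : a ∈ i
        · rw [if_pos hai] at hcard
          have hc1 : 0 < (i' ∩ i).card :=
            Finset.card_pos.2 ⟨a, Finset.mem_inter.2 ⟨ha, hai⟩⟩
          omega
        · rw [if_neg hai] at hcard
          omega
      rw [hset]
      simp

private lemma recurrence {l' : ℕ} (hl' : 1 ≤ l') (ψ : Finset (Fin n) → ℂ)
    (hψ : degenKer n l' ψ) (i : Finset (Fin n)) (t : ℕ) :
    ((l' - t : ℕ) : ℂ) *
        (∑ i' ∈ (univ.powersetCard l').filter (fun i' => (i' ∩ i).card = t), ψ i')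
      + ((t + 1 : ℕ) : ℂ) *
        (∑ i' ∈ (univ.powersetCard l').filter (fun i' => (i' ∩ i).card = t + 1), ψ i') = 0 := by
  classical
  have h0 : ∑ j ∈ (univ.powersetCard (l' - 1)).filter (fun j => (j ∩ i).card = t),
      ∑ a ∈ jᶜ, ψ (insert a j) = 0 := by
    refine Finset.sum_eq_zero fun j hj => ?_
    simp only [mem_filter, mem_powersetCard, subset_univ, true_and] at hj
    exact hψ j hj.1
  rw [Finset.sum_sigma'] at h0
  have h1 : ∑ x ∈ ((univ.powersetCard (l' - 1)).filter
        (fun j => (j ∩ i).card = t)).sigma (fun j => jᶜ), ψ (insert x.2 x.1)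
      = ∑ x ∈ (univ.powersetCard l').sigma
          (fun i' => i'.filter (fun a => ((i'.erase a) ∩ i).card = t)), ψ x.1 := by
    refine Finset.sum_nbij' (fun x => ⟨insert x.2 x.1, x.2⟩) (fun x => ⟨x.1.erase x.2, x.2⟩)
      ?_ ?_ ?_ ?_ ?_
    · rintro ⟨j, a⟩ hx
      simp only [Finset.mem_sigma, mem_filter, mem_powersetCard, subset_univ, true_and,
        Finset.mem_compl] at hx ⊢
      obtain ⟨⟨hjc, hji⟩, haj⟩ := hx
      have hcard : (insert a j).card = l' := by
        rw [Finset.card_insert_of_notMem haj, hjc]; omega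
      exact ⟨hcard, Finset.mem_insert_self _ _, by rw [Finset.erase_insert haj]; exact hji⟩
    · rintro ⟨i', a⟩ hx
      simp only [Finset.mem_sigma, mem_filter, mem_powersetCard, subset_univ, true_and,
        Finset.mem_compl] at hx ⊢
      obtain ⟨hi'c, ha, hcard⟩ := hx
      exact ⟨⟨by rw [Finset.card_erase_of_mem ha, hi'c], hcard⟩, Finset.notMem_erase a i'⟩
    · rintro ⟨j, a⟩ hx
      simp only [Finset.mem_sigma, mem_filter, Finset.mem_compl] at hx
      exact Sigma.ext (Finset.erase_insert hx.2) HEq.rfl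
    · rintro ⟨i', a⟩ hx
      simp only [Finset.mem_sigma, mem_filter] at hx
      exact Sigma.ext (Finset.insert_erase hx.2.1) HEq.rfl
    · rintro ⟨j, a⟩ _
      rfl
  have h2 : ∑ x ∈ (univ.powersetCard l').sigma
        (fun i' => i'.filter (fun a => ((i'.erase a) ∩ i).card = t)), ψ x.1
      = ((l' - t : ℕ) : ℂ) *
          (∑ i' ∈ (univ.powersetCard l').filter (fun i' => (i' ∩ i).card = t), ψ i')
        + ((t + 1 : ℕ) : ℂ) *
          (∑ i' ∈ (univ.powersetCard l').filter (fun i' => (i' ∩ i).card = t + 1), ψ i') := by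
    have step : ∀ i' ∈ univ.powersetCard l',
        ∑ _a ∈ i'.filter (fun a => ((i'.erase a) ∩ i).card = t), ψ i'
        = (if (i' ∩ i).card = t then ((l' - t : ℕ) : ℂ) * ψ i' else 0)
          + (if (i' ∩ i).card = t + 1 then ((t + 1 : ℕ) : ℂ) * ψ i' else 0) := by
      intro i' hi'
      rw [Finset.sum_const, count_lemma i i' (by simpa [mem_powersetCard] using hi'),
        add_smul, nsmul_eq_mul, nsmul_eq_mul]
      congr 1 <;> split <;> simp
    rw [Finset.sum_sigma]
    have conv1 : ∀ i' ∈ univ.powersetCard l',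
        (∑ a ∈ i'.filter (fun a => ((i'.erase a) ∩ i).card = t),
          ψ ((⟨i', a⟩ : Σ _ : Finset (Fin n), Fin n).1)) =
        ∑ _a ∈ i'.filter (fun a => ((i'.erase a) ∩ i).card = t), ψ i' := fun _ _ => rfl
    rw [Finset.sum_congr rfl conv1, Finset.sum_congr rfl step, Finset.sum_add_distrib,
      ← Finset.sum_filter, ← Finset.sum_filter, Finset.mul_sum, Finset.mul_sum]
  rw [h1, h2] at h0
  exact h0

private lemma key_zero {l' : ℕ} (hl' : 1 ≤ l') (ψ : Finset (Fin n) → ℂ)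
    (hψ : degenKer n l' ψ) (i : Finset (Fin n)) (hi : i.card < l') (t : ℕ) :
    ∑ i' ∈ (univ.powersetCard l').filter (fun i' => (i' ∩ i).card = t), ψ i' = 0 := by
  classical
  have empt : ∀ t' : ℕ, i.card < t' →
      ∑ i' ∈ (univ.powersetCard l').filter (fun i' => (i' ∩ i).card = t'), ψ i' = 0 := by
    intro t' ht'
    have : (univ.powersetCard l').filter (fun i' => (i' ∩ i).card = t') = ∅ := by
      rw [Finset.filter_eq_empty_iff]
      intro i' _ hc
      have : (i' ∩ i).card ≤ i.card := Finset.card_le_card (Finset.inter_subset_right)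
      omega
    rw [this, Finset.sum_empty]
  suffices H : ∀ d t, i.card < t + d →
      ∑ i' ∈ (univ.powersetCard l').filter (fun i' => (i' ∩ i).card = t), ψ i' = 0 by
    exact H (i.card + 1) t (by omega)
  intro d
  induction d with
  | zero => intro t ht; exact empt t (by omega)
  | succ d ih =>
    intro t ht
    by_cases htl : t < l'
    · have h2 := ih (t + 1) (by omega)
      have h3 := recurrence hl' ψ hψ i t
      rw [h2, mul_zero, add_zero] at h3
      have hne : ((l' - t : ℕ) : ℂ) ≠ 0 := by
        rw [Nat.cast_ne_zero]; omega
      exact (mul_eq_zero.1 h3).resolve_left hne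
    · exact empt t (by omega)

private lemma card_supersets {m : ℕ} (s : Finset (Fin n)) :
    (((univ : Finset (Fin n)).powersetCard m).filter (fun k => s ⊆ k)).card
      = if s.card ≤ m then (n - s.card).choose (m - s.card) else 0 := by
  classical
  by_cases hsm : s.card ≤ m
  · rw [if_pos hsm]
    have hbij : (((univ : Finset (Fin n)).powersetCard m).filter (fun k => s ⊆ k)).card
        = (sᶜ.powersetCard (m - s.card)).card := by
      refine Finset.card_nbij' (fun k => k \ s) (fun u => u ∪ s) ?_ ?_ ?_ ?_
      · intro k hk
        simp only [Finset.mem_coe, mem_filter, mem_powersetCard, subset_univ, true_and] at hk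
        rw [Finset.mem_coe, mem_powersetCard]
        constructor
        · intro a ha
          rw [Finset.mem_compl]
          exact (Finset.mem_sdiff.1 ha).2
        · rw [Finset.card_sdiff_of_subset hk.2, hk.1]
      · intro u hu
        rw [Finset.mem_coe, mem_powersetCard] at hu
        have hdisj : Disjoint u s := by
          rw [Finset.disjoint_left]
          intro a hau has
          exact (Finset.mem_compl.1 (hu.1 hau)) has
        simp only [Finset.mem_coe, mem_filter, mem_powersetCard, subset_univ, true_and]
        constructor
        · rw [Finset.card_union_of_disjoint hdisj, hu.2]; omega
        · exact Finset.subset_union_right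
      · intro k hk
        simp only [Finset.mem_coe, mem_filter, mem_powersetCard, subset_univ, true_and] at hk
        exact Finset.sdiff_union_of_subset hk.2
      · intro u hu
        rw [Finset.mem_coe, mem_powersetCard] at hu
        have hdisj : Disjoint u s := by
          rw [Finset.disjoint_left]
          intro a hau has
          exact (Finset.mem_compl.1 (hu.1 hau)) has
        exact Finset.union_sdiff_cancel_right hdisj
    rw [hbij, Finset.card_powersetCard, Finset.card_compl, Fintype.card_fin]
  · rw [if_neg hsm]
    rw [Finset.card_eq_zero, Finset.filter_eq_empty_iff]
    intro k hk hsk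
    rw [mem_powersetCard] at hk
    have := Finset.card_le_card hsk
    omega

private def Wc (n m l l' : ℕ) : ℕ → ℂ := fun t =>
  ((if l + l' - t ≤ m then (n - (l + l' - t)).choose (m - (l + l' - t)) else 0 : ℕ) : ℂ)

private lemma main_sum_zero (m l l' : ℕ) (hl : 1 ≤ l) (hll' : l < l')
    (φ ψ : Finset (Fin n) → ℂ) (hψ : degenKer n l' ψ) :
    ∑ k ∈ (univ : Finset (Fin n)).powersetCard m,
      (∑ i ∈ k.powersetCard l, φ i) * (∑ i' ∈ k.powersetCard l', ψ i') = 0 := by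
  classical
  have hpc : ∀ (r : ℕ) (k : Finset (Fin n)),
      k.powersetCard r = (univ.powersetCard r).filter (fun i => i ⊆ k) := by
    intro r k; ext i
    simp only [mem_powersetCard, mem_filter, subset_univ, true_and]
    tauto
  have step1 : ∀ k : Finset (Fin n),
      (∑ i ∈ k.powersetCard l, φ i) * (∑ i' ∈ k.powersetCard l', ψ i')
      = ∑ i ∈ univ.powersetCard l, ∑ i' ∈ univ.powersetCard l',
          if i ∪ i' ⊆ k then φ i * ψ i' else 0 := by
    intro k
    rw [hpc l k, hpc l' k, Finset.sum_filter, Finset.sum_filter, Finset.sum_mul_sum]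
    refine Finset.sum_congr rfl fun i _ => Finset.sum_congr rfl fun i' _ => ?_
    by_cases hp : i ⊆ k <;> by_cases hq : i' ⊆ k <;>
      simp [hp, hq, Finset.union_subset_iff]
  rw [Finset.sum_congr rfl fun k _ => step1 k, Finset.sum_comm]
  refine Finset.sum_eq_zero fun i hi => ?_
  rw [Finset.sum_comm]
  have hicard : i.card = l := by simpa [mem_powersetCard] using hi
  have step2 : ∀ i' ∈ (univ : Finset (Fin n)).powersetCard l',
      (∑ k ∈ (univ : Finset (Fin n)).powersetCard m,
        if i ∪ i' ⊆ k then φ i * ψ i' else 0)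
      = Wc n m l l' ((i' ∩ i).card) * (φ i * ψ i') := by
    intro i' hi'
    have hi'card : i'.card = l' := by simpa [mem_powersetCard] using hi'
    have hcc := Finset.card_inter_add_card_union i i'
    have hle : (i ∩ i').card ≤ i.card := Finset.card_le_card Finset.inter_subset_left
    have hcomm : (i ∩ i').card = (i' ∩ i).card := by rw [Finset.inter_comm]
    have hu : (i ∪ i').card = l + l' - (i' ∩ i).card := by omega
    rw [← Finset.sum_filter, Finset.sum_const, card_supersets (i ∪ i'), hu, nsmul_eq_mul]
    rfl
  rw [Finset.sum_congr rfl step2]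
  have hmaps : ∀ i' ∈ (univ : Finset (Fin n)).powersetCard l',
      (i' ∩ i).card ∈ Finset.range (l + 1) := by
    intro i' _
    rw [Finset.mem_range]
    have : (i' ∩ i).card ≤ i.card := Finset.card_le_card Finset.inter_subset_right
    omega
  rw [← Finset.sum_fiberwise_of_maps_to hmaps]
  refine Finset.sum_eq_zero fun t' _ => ?_
  have hconst : ∀ i' ∈ ((univ : Finset (Fin n)).powersetCard l').filter
      (fun i' => (i' ∩ i).card = t'),
      Wc n m l l' ((i' ∩ i).card) * (φ i * ψ i')
        = (Wc n m l l' t' * φ i) * ψ i' := by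
    intro i' h
    rw [(Finset.mem_filter.1 h).2]
    ring
  rw [Finset.sum_congr rfl hconst, ← Finset.mul_sum,
    key_zero (by omega) ψ hψ i (by omega) t', mul_zero]

private lemma image_image_inv (τ : Equiv.Perm (Fin n)) (s : Finset (Fin n)) :
    (s.image ⇑τ).image ⇑τ⁻¹ = s := by
  rw [Finset.image_image, ← Equiv.Perm.coe_mul, inv_mul_cancel]
  simp

private lemma perm_sum_zero {m : ℕ} (s0 : Finset (Fin n)) (hs0 : s0.card = m)
    (F : Finset (Fin n) → ℂ)
    (hF : ∑ k ∈ (univ : Finset (Fin n)).powersetCard m, F k = 0) :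
    ∑ x : Equiv.Perm (Fin n), F (s0.image ⇑x) = 0 := by
  classical
  have hmaps : ∀ x ∈ (univ : Finset (Equiv.Perm (Fin n))),
      s0.image ⇑x ∈ (univ : Finset (Fin n)).powersetCard m := by
    intro x _
    rw [mem_powersetCard]
    exact ⟨subset_univ _, by rw [Finset.card_image_of_injective _ x.injective, hs0]⟩
  rw [← Finset.sum_fiberwise_of_maps_to hmaps (fun x : Equiv.Perm (Fin n) => F (s0.image ⇑x))]
  have hfib : ∀ k ∈ (univ : Finset (Fin n)).powersetCard m,
      ((univ : Finset (Equiv.Perm (Fin n))).filter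
          (fun x : Equiv.Perm (Fin n) => s0.image ⇑x = k)).card
        = ((univ : Finset (Equiv.Perm (Fin n))).filter
          (fun x : Equiv.Perm (Fin n) => s0.image ⇑x = s0)).card := by
    intro k hk
    rw [mem_powersetCard] at hk
    obtain ⟨σ, hσ⟩ : ∃ σ : Equiv.Perm (Fin n), s0.image ⇑σ = k := by
      have hcard : Fintype.card {a : Fin n // a ∈ s0} = Fintype.card {a : Fin n // a ∈ k} := by
        rw [Fintype.card_coe, Fintype.card_coe, hs0, hk.2]
      have e : {a : Fin n // a ∈ s0} ≃ {a : Fin n // a ∈ k} := Fintype.equivOfCardEq hcard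
      refine ⟨e.extendSubtype, ?_⟩
      apply Finset.eq_of_subset_of_card_le
      · intro b hb
        obtain ⟨a, ha, rfl⟩ := Finset.mem_image.1 hb
        exact e.extendSubtype_mem a ha
      · rw [Finset.card_image_of_injective _ (Equiv.injective _), hs0, hk.2]
    refine Finset.card_nbij' (fun x => σ⁻¹ * x) (fun y => σ * y) ?_ ?_ ?_ ?_
    · intro x hx
      simp only [Finset.mem_coe, Finset.mem_filter, Finset.mem_univ, true_and] at hx ⊢
      rw [Equiv.Perm.coe_mul, ← Finset.image_image, hx, ← hσ, image_image_inv]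
    · intro y hy
      simp only [Finset.mem_coe, Finset.mem_filter, Finset.mem_univ, true_and] at hy ⊢
      rw [Equiv.Perm.coe_mul, ← Finset.image_image, hy, hσ]
    · intro x _
      exact mul_inv_cancel_left σ x
    · intro y _
      exact inv_mul_cancel_left σ y
  calc ∑ k ∈ (univ : Finset (Fin n)).powersetCard m,
        ∑ x ∈ (univ : Finset (Equiv.Perm (Fin n))).filter
            (fun x : Equiv.Perm (Fin n) => s0.image ⇑x = k),
          F (s0.image ⇑x)
      = ∑ k ∈ (univ : Finset (Fin n)).powersetCard m,
          ((univ : Finset (Equiv.Perm (Fin n))).filter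
            (fun x : Equiv.Perm (Fin n) => s0.image ⇑x = s0)).card • F k := by
        refine Finset.sum_congr rfl fun k hk => ?_
        rw [← hfib k hk, ← Finset.sum_const]
        refine Finset.sum_congr rfl fun x hx => ?_
        rw [(Finset.mem_filter.1 hx).2]
    _ = ((univ : Finset (Equiv.Perm (Fin n))).filter
          (fun x : Equiv.Perm (Fin n) => s0.image ⇑x = s0)).card •
            ∑ k ∈ (univ : Finset (Fin n)).powersetCard m, F k := by
        rw [Finset.smul_sum]
    _ = 0 := by rw [hF, smul_zero]

end Aux


/-- Symmetric `U`-statistics with completely degenerate kernels of different orders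
`l < l'` are orthogonal: `E[f(X_{(m)}) conj(h(X_{(m)}))] = 0`, equivalently
`C(n,m)⁻¹ ∑_k f(k) conj(h(k)) = 0` over all `m`-subsets `k`. -/

theorem degenerate_U_statistics_orthogonal (n m l l' : ℕ) (hn : 2 ≤ n)
    (hl : 1 ≤ l) (hll' : l < l') (hl'm : l' ≤ m) (hm : 2 * m ≤ n)
    (φ ψ : Finset (Fin n) → ℂ) (hφ : degenKer n l φ) (hψ : degenKer n l' ψ) :
    Eperm n (fun x =>
        (∑ i ∈ ((firstSet n m (by omega)).1.image x).powersetCard l, φ i) *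
          (starRingEnd ℂ)
            (∑ i ∈ ((firstSet n m (by omega)).1.image x).powersetCard l', ψ i)) = 0 ∧
    (Nat.choose n m : ℂ)⁻¹ *
        ∑ k ∈ (Finset.univ : Finset (Fin n)).powersetCard m,
          (∑ i ∈ k.powersetCard l, φ i) *
            (starRingEnd ℂ) (∑ i ∈ k.powersetCard l', ψ i) = 0 := by
  classical
  have hψ' : degenKer n l' (fun s => (starRingEnd ℂ) (ψ s)) := by
    intro j hj
    rw [← map_sum, hψ j hj, map_zero]
  have hS : ∑ k ∈ (Finset.univ : Finset (Fin n)).powersetCard m,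
      (∑ i ∈ k.powersetCard l, φ i) *
        (starRingEnd ℂ) (∑ i ∈ k.powersetCard l', ψ i) = 0 := by
    have hmain := main_sum_zero m l l' hl hll' φ (fun s => (starRingEnd ℂ) (ψ s)) hψ'
    rw [← hmain]
    exact Finset.sum_congr rfl fun k _ => by rw [map_sum]
  refine ⟨?_, by rw [hS, mul_zero]⟩
  unfold Eperm
  rw [perm_sum_zero (firstSet n m (by omega)).1 (firstSet n m (by omega)).2
    (fun k => (∑ i ∈ k.powersetCard l, φ i) *
      (starRingEnd ℂ) (∑ i ∈ k.powersetCard l', ψ i)) hS, zero_div]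
end

section
/- Let n ≥ 2 and 1 ≤ m ≤ n/2. For l = 1,...,m let W_l denote the subspace of L(V^{(n-m,m)}) (complex functions on m-subsets of {1,...,n}) consisting of all f of the form f(k) = ∑_{i ⊆ k, |i| = l} φ(i) with φ a completely degenerate kernel of order l, and let W_0 be the constants. Then L(V^{(n-m,m)}) = W_0 ⊕ W_1 ⊕ ... ⊕ W_m as an orthogonal direct sum with respect to the inner product ⟨f,h⟩ = C(n,m)^{-1} ∑_k f(k) conj(h(k)), and each W_l is invariant under the S_n-action (x·f)(k) = f(x⁻¹·k). -/
open Finset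

/-- The `l`-th symmetric Hoeffding space `W_l` inside `L(V^{(n-m,m)})`: for `l = 0`
the constants, and for `l ≥ 1` the functions `f(k) = ∑_{i ⊆ k, |i| = l} φ(i)` with
`φ` a completely degenerate kernel of order `l`. -/
noncomputable def HoeffSpace (n m l : ℕ) : Submodule ℂ (VSet n m → ℂ) :=
  if l = 0 then Submodule.span ℂ {(fun _ => (1 : ℂ) : VSet n m → ℂ)}
  else Submodule.span ℂ
    {f : VSet n m → ℂ | ∃ φ : Finset (Fin n) → ℂ, degenKer n l φ ∧
      ∀ k : VSet n m, f k = ∑ i ∈ k.1.powersetCard l, φ i}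

namespace HoeffAux

variable {n : ℕ}

lemma insert_inj_of_notMem {s : Finset (Fin n)} {a a' : Fin n} (ha : a ∉ s)
    (h : insert a s = insert a' s) : a = a' := by
  have h2 : a ∈ insert a' s := h ▸ mem_insert_self a s
  rcases mem_insert.mp h2 with h1 | h1
  · exact h1
  · exact absurd h1 ha

/-- The sets `b` with `s ⊆ b ⊆ K` and `|b| = |s|+1` are the images of `insert · s`
over `K \ s`. -/
lemma filter_between_eq_image (s K : Finset (Fin n)) (hsK : s ⊆ K) :
    (((univ : Finset (Fin n)).powersetCard (s.card + 1)).filter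
        (fun b => s ⊆ b ∧ b ⊆ K))
      = (K \ s).image (fun a => insert a s) := by
  ext b
  simp only [mem_filter, Finset.mem_powersetCard_univ, mem_image, mem_sdiff]
  constructor
  · rintro ⟨hc, hsb, hbK⟩
    obtain ⟨a, ha⟩ : (b \ s).Nonempty := by
      rw [← Finset.card_pos, card_sdiff_of_subset hsb, hc]; omega
    rw [mem_sdiff] at ha
    refine ⟨a, ⟨hbK ha.1, ha.2⟩, ?_⟩
    refine Finset.eq_of_subset_of_card_le (insert_subset ha.1 hsb) ?_
    rw [hc, card_insert_of_notMem ha.2]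
  · rintro ⟨a, ⟨haK, has⟩, rfl⟩
    exact ⟨card_insert_of_notMem has, subset_insert _ _, insert_subset haK hsK⟩

lemma card_filter_between (s K : Finset (Fin n)) (hsK : s ⊆ K) :
    (((univ : Finset (Fin n)).powersetCard (s.card + 1)).filter
        (fun b => s ⊆ b ∧ b ⊆ K)).card = K.card - s.card := by
  rw [filter_between_eq_image s K hsK, Finset.card_image_of_injOn, card_sdiff_of_subset hsK]
  intro a ha a' ha' h
  rw [Finset.mem_coe, mem_sdiff] at ha
  exact insert_inj_of_notMem ha.2 h

lemma card_filter_between' {s K : Finset (Fin n)} (hsK : ¬ s ⊆ K) (c : ℕ) :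
    (((univ : Finset (Fin n)).powersetCard c).filter
        (fun b => s ⊆ b ∧ b ⊆ K)) = ∅ := by
  apply Finset.filter_eq_empty_iff.mpr
  rintro b - ⟨hsb, hbK⟩
  exact hsK (hsb.trans hbK)

/-- Sum over supersets of `s` of cardinality `|s|+1` as a sum over `sᶜ`. -/
lemma sum_filter_superset (s : Finset (Fin n)) (F : Finset (Fin n) → ℂ) :
    ∑ b ∈ ((univ : Finset (Fin n)).powersetCard (s.card + 1)).filter
        (fun b => s ⊆ b), F b
      = ∑ a ∈ sᶜ, F (insert a s) := by
  have h1 : ((univ : Finset (Fin n)).powersetCard (s.card + 1)).filter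
        (fun b => s ⊆ b)
      = ((univ : Finset (Fin n)).powersetCard (s.card + 1)).filter
        (fun b => s ⊆ b ∧ b ⊆ univ) := by
    apply filter_congr; intro b _; simp [subset_univ]
  rw [h1, filter_between_eq_image s univ (subset_univ s), Finset.sum_image, compl_eq_univ_sdiff]
  intro a ha a' ha' h
  rw [Finset.mem_coe, mem_sdiff] at ha
  exact insert_inj_of_notMem ha.2 h

/-- Generic filtered double-sum exchange. -/
lemma sum_filter_comm (A B : Finset (Finset (Fin n)))
    (P : Finset (Fin n) → Finset (Fin n) → Prop) [∀ a b, Decidable (P a b)]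
    (F : Finset (Fin n) → Finset (Fin n) → ℂ) :
    ∑ a ∈ A, ∑ b ∈ B.filter (fun b => P a b), F a b
      = ∑ b ∈ B, ∑ a ∈ A.filter (fun a => P a b), F a b := by
  simp_rw [sum_filter]
  exact Finset.sum_comm

/-- `K.powersetCard c` as a filter of all `c`-subsets. -/
lemma powersetCard_eq_filter (K : Finset (Fin n)) (c : ℕ) :
    K.powersetCard c
      = ((univ : Finset (Fin n)).powersetCard c).filter (fun b => b ⊆ K) := by
  ext b
  simp only [mem_powersetCard, mem_filter, Finset.mem_powersetCard_univ, subset_univ, true_and]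
  exact and_comm

/-- Complete degeneracy kills all sums over supersets of small sets. -/
lemma degen_sum_superset {l : ℕ} (hl : 1 ≤ l) {φ : Finset (Fin n) → ℂ}
    (hφ : degenKer n l φ) (s : Finset (Fin n)) (hs : s.card ≤ l - 1) :
    ∑ j ∈ ((univ : Finset (Fin n)).powersetCard l).filter (fun j => s ⊆ j), φ j = 0 := by
  obtain ⟨t, ht⟩ : ∃ t, s.card + t = l - 1 := ⟨l - 1 - s.card, by omega⟩
  clear hs
  induction t generalizing s with
  | zero =>
    have hcard : l = s.card + 1 := by omega
    subst hcard
    rw [sum_filter_superset s φ]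
    exact hφ s (by omega)
  | succ t ih =>
    have key : ∀ b ∈ ((univ : Finset (Fin n)).powersetCard (s.card + 1)).filter
        (fun b => s ⊆ b),
        ∑ j ∈ ((univ : Finset (Fin n)).powersetCard l).filter (fun j => b ⊆ j), φ j = 0 := by
      intro b hb
      rw [mem_filter, Finset.mem_powersetCard_univ] at hb
      exact ih b (by omega)
    have h0 : (0 : ℂ) = ∑ b ∈ ((univ : Finset (Fin n)).powersetCard (s.card + 1)).filter
        (fun b => s ⊆ b),
        ∑ j ∈ ((univ : Finset (Fin n)).powersetCard l).filter (fun j => b ⊆ j), φ j := by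
      rw [Finset.sum_congr rfl key, Finset.sum_const, smul_zero]
    rw [sum_filter_comm _ _ (fun b j => b ⊆ j) (fun _ j => φ j)] at h0
    -- now h0 : 0 = ∑ j ∈ Sl l, ∑ b ∈ (filter (s ⊆ ·) _).filter (· ⊆ j), φ j
    have h1 : ∀ j ∈ ((univ : Finset (Fin n)).powersetCard l),
        ∑ b ∈ (((univ : Finset (Fin n)).powersetCard (s.card + 1)).filter
            (fun b => s ⊆ b)).filter (fun b => b ⊆ j), φ j
          = if s ⊆ j then ((l - s.card : ℕ) : ℂ) * φ j else 0 := by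
      intro j hj
      rw [Finset.mem_powersetCard_univ] at hj
      rw [Finset.filter_filter, Finset.sum_const]
      by_cases hsj : s ⊆ j
      · rw [if_pos hsj, card_filter_between s j hsj, hj, nsmul_eq_mul]
      · rw [if_neg hsj, card_filter_between' hsj, Finset.card_empty, zero_smul]
    rw [Finset.sum_congr rfl h1, Finset.sum_ite, Finset.sum_const_zero, add_zero,
      ← Finset.mul_sum] at h0
    have hne : ((l - s.card : ℕ) : ℂ) ≠ 0 := by
      have h2 : l - s.card ≠ 0 := by omega
      exact_mod_cast h2
    exact (mul_eq_zero.mp h0.symm).resolve_left hne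

/-- Möbius-type coefficients: `∑_{u ≤ t} C(t,u) d u = c t`. -/
noncomputable def dcoef (c : ℕ → ℂ) : ℕ → ℂ
  | t => c t - ∑ u ∈ (Finset.range t).attach,
      ((t.choose u.1 : ℕ) : ℂ) * dcoef c u.1
  decreasing_by exact Finset.mem_range.mp u.2

lemma dcoef_eq (c : ℕ → ℂ) (t : ℕ) :
    dcoef c t = c t - ∑ u ∈ Finset.range t, ((t.choose u : ℕ) : ℂ) * dcoef c u := by
  rw [dcoef, ← Finset.sum_attach (Finset.range t) (fun u => ((t.choose u : ℕ) : ℂ) * dcoef c u)]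

lemma dcoef_spec (c : ℕ → ℂ) {α : Type*} [DecidableEq α] (T : Finset α) :
    ∑ s ∈ T.powerset, dcoef c s.card = c T.card := by
  rw [Finset.sum_powerset_apply_card, Finset.sum_range_succ, Nat.choose_self, one_smul,
    dcoef_eq]
  have : ∀ u ∈ Finset.range T.card, T.card.choose u • dcoef c u
      = ((T.card.choose u : ℕ) : ℂ) * dcoef c u := by
    intro u _; rw [nsmul_eq_mul]
  rw [Finset.sum_congr rfl this]
  ring

/-- Weighted sums of a completely degenerate kernel, with weights depending only
on the intersection size with a small fixed set, vanish. -/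
lemma degen_weighted_sum {l' : ℕ} (hl' : 1 ≤ l') {ψ : Finset (Fin n) → ℂ}
    (hψ : degenKer n l' ψ) (i : Finset (Fin n)) (hi : i.card ≤ l' - 1) (c : ℕ → ℂ) :
    ∑ j ∈ (univ : Finset (Fin n)).powersetCard l', c ((i ∩ j).card) * ψ j = 0 := by
  have h1 : ∀ j ∈ (univ : Finset (Fin n)).powersetCard l',
      c ((i ∩ j).card) * ψ j
        = ∑ s ∈ i.powerset.filter (fun s => s ⊆ j), dcoef c s.card * ψ j := by
    intro j _
    rw [← Finset.sum_mul]
    congr 1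
    rw [← dcoef_spec c (i ∩ j)]
    congr 1
    ext s
    simp only [mem_powerset, mem_filter, subset_inter_iff]
  rw [Finset.sum_congr rfl h1, sum_filter_comm _ _ (fun j s => s ⊆ j)
    (fun j s => dcoef c s.card * ψ j)]
  apply Finset.sum_eq_zero
  intro s hs
  rw [← Finset.mul_sum, degen_sum_superset hl' hψ s ?_, mul_zero]
  have := Finset.card_le_card (Finset.mem_powerset.mp hs)
  omega

/-- The number of `m`-subsets containing a fixed set `A`. -/
lemma card_supersets (m : ℕ) (A : Finset (Fin n)) :
    (((univ : Finset (Fin n)).powersetCard m).filter (fun K => A ⊆ K)).card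
      = if A.card ≤ m then (n - A.card).choose (m - A.card) else 0 := by
  split_ifs with h
  · have := Finset.card_bij' (fun (K : Finset (Fin n)) (_ : K ∈ ((univ : Finset (Fin n)).powersetCard m).filter (fun K => A ⊆ K)) => K \ A)
      (fun (B : Finset (Fin n)) (_ : B ∈ Aᶜ.powersetCard (m - A.card)) => B ∪ A)
      ?hi ?hj ?left ?right
    · rw [this, Finset.card_powersetCard, Finset.card_compl, Fintype.card_fin]
    case hi =>
      intro K hK
      rw [mem_filter, Finset.mem_powersetCard_univ] at hK
      rw [mem_powersetCard]
      constructor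
      · intro x hx
        rw [mem_sdiff] at hx
        exact Finset.mem_compl.mpr hx.2
      · rw [card_sdiff_of_subset hK.2, hK.1]
    case hj =>
      intro B hB
      rw [mem_powersetCard] at hB
      rw [mem_filter, Finset.mem_powersetCard_univ]
      have hd : Disjoint B A := by
        rw [Finset.disjoint_right]
        intro x hxA hxB
        exact Finset.mem_compl.mp (hB.1 hxB) hxA
      constructor
      · rw [Finset.card_union_of_disjoint hd, hB.2]
        omega
      · exact Finset.subset_union_right
    case left =>
      intro K hK
      rw [mem_filter] at hK
      exact Finset.sdiff_union_of_subset hK.2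
    case right =>
      intro B hB
      rw [mem_powersetCard] at hB
      show (B ∪ A) \ A = B
      rw [Finset.union_sdiff_right, Finset.sdiff_eq_self_iff_disjoint.mpr]
      rw [Finset.disjoint_left]
      intro x hxB hxA
      exact Finset.mem_compl.mp (hB.1 hxB) hxA
  · rw [Finset.card_eq_zero]
    apply Finset.filter_eq_empty_iff.mpr
    intro K hK
    rw [Finset.mem_powersetCard_univ] at hK
    intro hAK
    exact h (hK ▸ Finset.card_le_card hAK)

/-- Key orthogonality computation: a lift of order `l` is orthogonal to a lift
of a completely degenerate kernel of higher order `l'`. -/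
lemma ortho_lift {m l l' : ℕ} (hll' : l < l') (φ ψ : Finset (Fin n) → ℂ)
    (hψ : degenKer n l' ψ) :
    ∑ K ∈ (univ : Finset (Fin n)).powersetCard m,
      (∑ i ∈ K.powersetCard l, φ i) * (∑ j ∈ K.powersetCard l', ψ j) = 0 := by
  have step1 : ∀ K ∈ (univ : Finset (Fin n)).powersetCard m,
      (∑ i ∈ K.powersetCard l, φ i) * (∑ j ∈ K.powersetCard l', ψ j)
        = ∑ i ∈ (univ : Finset (Fin n)).powersetCard l,
            ∑ j ∈ (univ : Finset (Fin n)).powersetCard l',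
              if i ∪ j ⊆ K then φ i * ψ j else 0 := by
    intro K _
    rw [powersetCard_eq_filter K l, powersetCard_eq_filter K l', Finset.sum_filter,
      Finset.sum_filter, Finset.sum_mul_sum]
    apply Finset.sum_congr rfl; intro i _
    apply Finset.sum_congr rfl; intro j _
    by_cases h1 : i ⊆ K <;> by_cases h2 : j ⊆ K <;>
      simp [h1, h2, Finset.union_subset_iff]
  rw [Finset.sum_congr rfl step1]
  rw [Finset.sum_comm]
  have step2 : ∀ i ∈ (univ : Finset (Fin n)).powersetCard l,
      ∑ K ∈ (univ : Finset (Fin n)).powersetCard m,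
        ∑ j ∈ (univ : Finset (Fin n)).powersetCard l',
          (if i ∪ j ⊆ K then φ i * ψ j else 0)
      = φ i * ∑ j ∈ (univ : Finset (Fin n)).powersetCard l',
          (fun t => if l + l' - t ≤ m then (((n - (l + l' - t)).choose (m - (l + l' - t)) : ℕ) : ℂ) else 0) ((i ∩ j).card) * ψ j := by
    intro i hi
    rw [Finset.mem_powersetCard_univ] at hi
    rw [Finset.sum_comm, Finset.mul_sum]
    apply Finset.sum_congr rfl
    intro j hj
    rw [Finset.mem_powersetCard_univ] at hj
    have hcard : (i ∪ j).card = l + l' - (i ∩ j).card := by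
      have h1 := Finset.card_union_add_card_inter i j
      have h2 : (i ∩ j).card ≤ i.card := Finset.card_le_card Finset.inter_subset_left
      omega
    have : ∑ K ∈ (univ : Finset (Fin n)).powersetCard m,
        (if i ∪ j ⊆ K then φ i * ψ j else 0)
        = (((univ : Finset (Fin n)).powersetCard m).filter (fun K => i ∪ j ⊆ K)).card
            • (φ i * ψ j) := by
      rw [← Finset.sum_filter, Finset.sum_const]
    rw [this, card_supersets m (i ∪ j), hcard, nsmul_eq_mul]
    simp only []
    split_ifs with h1
    · push_cast; ring
    · simp
  rw [Finset.sum_congr rfl step2]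
  apply Finset.sum_eq_zero
  intro i hi
  rw [Finset.mem_powersetCard_univ] at hi
  have h0 := degen_weighted_sum (show 1 ≤ l' by omega) hψ i (by omega)
    (fun t => if l + l' - t ≤ m then (((n - (l + l' - t)).choose (m - (l + l' - t)) : ℕ) : ℂ) else 0)
  exact mul_eq_zero_of_right (φ i) h0

/-- Full sum over all finsets written as a sum over a `powersetCard` when the
summand is supported on sets of a fixed cardinality. -/
lemma sum_support_card (c : ℕ) (G : Finset (Fin n) → ℂ) :
    ∑ i : Finset (Fin n), (if i.card = c then G i else 0)
      = ∑ i ∈ (univ : Finset (Fin n)).powersetCard c, G i := by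
  rw [← Finset.sum_filter]
  apply Finset.sum_congr _ (fun _ _ => rfl)
  ext i
  simp [Finset.mem_powersetCard_univ]

/-- The lifting operator from kernels of order `l` to kernels of order `l+1`. -/
noncomputable def liftMap (n l : ℕ) :
    EuclideanSpace ℂ (Finset (Fin n)) →ₗ[ℂ] EuclideanSpace ℂ (Finset (Fin n)) where
  toFun χ := WithLp.toLp 2 (fun i => if i.card = l + 1 then ∑ s ∈ i.powersetCard l, χ s else 0)
  map_add' χ ψ := by
    ext i
    simp only [PiLp.add_apply]
    split_ifs <;> simp [Finset.sum_add_distrib]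
  map_smul' c χ := by
    ext i
    simp only [PiLp.smul_apply, RingHom.id_apply, smul_eq_mul]
    split_ifs <;> simp [Finset.mul_sum]

/-- The degeneracy operator from kernels of order `l+1` to kernels of order `l`. -/
noncomputable def degMap (n l : ℕ) :
    EuclideanSpace ℂ (Finset (Fin n)) → EuclideanSpace ℂ (Finset (Fin n)) :=
  fun ψ => WithLp.toLp 2 (fun j => if j.card = l then ∑ a ∈ jᶜ, ψ (insert a j) else 0)

lemma adj (l : ℕ) (χ φ : EuclideanSpace ℂ (Finset (Fin n))) :
    inner ℂ (liftMap n l χ) φ = (inner ℂ χ (degMap n l φ) : ℂ) := by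
  rw [PiLp.inner_apply, PiLp.inner_apply]
  simp only [RCLike.inner_apply, liftMap, degMap, LinearMap.coe_mk, AddHom.coe_mk]
  rw [Finset.sum_congr rfl (fun x _ => mul_comm (φ.ofLp x) _),
    Finset.sum_congr rfl (fun x _ => mul_comm _ ((starRingEnd ℂ) (χ.ofLp x)))]
  have lhs : ∑ i : Finset (Fin n),
      (starRingEnd ℂ) (if i.card = l + 1 then ∑ s ∈ i.powersetCard l, χ s else 0) * φ i
      = ∑ i : Finset (Fin n),
        (if i.card = l + 1 then (∑ s ∈ i.powersetCard l, (starRingEnd ℂ) (χ s)) * φ i else 0) := by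
    apply Finset.sum_congr rfl; intro i _
    split_ifs <;> simp [map_sum]
  have rhs : ∑ s : Finset (Fin n),
      (starRingEnd ℂ) (χ s) * (if s.card = l then ∑ a ∈ sᶜ, φ (insert a s) else 0)
      = ∑ s : Finset (Fin n),
        (if s.card = l then (starRingEnd ℂ) (χ s) * ∑ a ∈ sᶜ, φ (insert a s) else 0) := by
    apply Finset.sum_congr rfl; intro s _
    split_ifs <;> simp
  rw [lhs, rhs, sum_support_card (l+1), sum_support_card l]
  have step : ∀ i ∈ (univ : Finset (Fin n)).powersetCard (l+1),
      (∑ s ∈ i.powersetCard l, (starRingEnd ℂ) (χ s)) * φ i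
      = ∑ s ∈ ((univ : Finset (Fin n)).powersetCard l).filter (fun s => s ⊆ i),
          (starRingEnd ℂ) (χ s) * φ i := by
    intro i _
    rw [powersetCard_eq_filter i l, Finset.sum_mul]
  rw [Finset.sum_congr rfl step,
    sum_filter_comm _ _ (fun i s => s ⊆ i) (fun i s => (starRingEnd ℂ) (χ s) * φ i)]
  apply Finset.sum_congr rfl
  intro s hs
  rw [Finset.mem_powersetCard_univ] at hs
  rw [← hs, sum_filter_superset s (fun b => (starRingEnd ℂ) (χ s) * φ b), Finset.mul_sum]

/-- Decomposition of an arbitrary kernel of order `l+1` into a completely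
degenerate kernel plus a lift of a kernel of order `l`. -/
lemma exists_decomp (l : ℕ) (φ : Finset (Fin n) → ℂ) :
    ∃ φ₁ χ : Finset (Fin n) → ℂ, degenKer n (l+1) φ₁ ∧
      ∀ i : Finset (Fin n), i.card = l + 1 →
        φ i = φ₁ i + ∑ s ∈ i.powersetCard l, χ s := by
  set S := liftMap n l
  set φ' : EuclideanSpace ℂ (Finset (Fin n)) :=
    WithLp.toLp 2 (fun i => if i.card = l + 1 then φ i else 0) with hφ'
  obtain ⟨y, hy, z, hz, hsum⟩ :=
    Submodule.exists_add_mem_mem_orthogonal (K := LinearMap.range S) φ'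
  obtain ⟨χ, rfl⟩ := hy
  refine ⟨z, χ, ?_, ?_⟩
  · intro j hj
    have hj' : j.card = l := by simpa using hj
    have hT : degMap n l z = 0 := by
      have h1 : ∀ χ0 : EuclideanSpace ℂ (Finset (Fin n)), (inner ℂ χ0 (degMap n l z) : ℂ) = 0 := by
        intro χ0
        rw [← adj]
        exact (Submodule.mem_orthogonal _ _).mp hz _ ⟨χ0, rfl⟩
      have h2 := h1 (degMap n l z)
      rwa [inner_self_eq_zero] at h2
    have h3 : (if j.card = l then ∑ a ∈ jᶜ, z (insert a j) else 0) = 0 :=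
      congrArg (fun v : EuclideanSpace ℂ (Finset (Fin n)) => v j) hT
    rwa [if_pos hj'] at h3
  · intro i hi
    have h4 := congrArg (fun v : EuclideanSpace ℂ (Finset (Fin n)) => v i) hsum
    have h5 : φ' i = φ i := by rw [hφ']; exact if_pos hi
    have h6 : (S χ + z) i = S χ i + z i := rfl
    have h7 : S χ i = ∑ s ∈ i.powersetCard l, χ s := by
      show (if i.card = l + 1 then ∑ s ∈ i.powersetCard l, χ s else 0) = _
      exact if_pos hi
    rw [h6, h5, h7] at h4
    rw [h4]; ring

/-- Double counting: summing the `l`-subset sums over all `(l+1)`-subsets of `K`. -/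
lemma sum_sum_powersetCard (K : Finset (Fin n)) (c : ℕ) (F : Finset (Fin n) → ℂ) :
    ∑ i ∈ K.powersetCard (c+1), ∑ s ∈ i.powersetCard c, F s
      = (K.card - c) • ∑ s ∈ K.powersetCard c, F s := by
  have step : ∀ i ∈ K.powersetCard (c+1),
      ∑ s ∈ i.powersetCard c, F s
      = ∑ s ∈ ((univ : Finset (Fin n)).powersetCard c).filter (fun s => s ⊆ i), F s := by
    intro i _
    rw [powersetCard_eq_filter i c]
  rw [Finset.sum_congr rfl step,
    sum_filter_comm _ _ (fun i s => s ⊆ i) (fun _ s => F s)]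
  have he : ∀ s : Finset (Fin n), s.card = c → (K.powersetCard (c+1)).filter (fun i => s ⊆ i)
      = ((univ : Finset (Fin n)).powersetCard (s.card+1)).filter (fun b => s ⊆ b ∧ b ⊆ K) := by
    intro s hs
    rw [hs, powersetCard_eq_filter K (c+1), Finset.filter_filter]
    apply filter_congr; intro b _; simp [and_comm]
  have h2 : ∑ b ∈ (univ : Finset (Fin n)).powersetCard c,
      ∑ a ∈ (K.powersetCard (c+1)).filter (fun i => b ⊆ i), F b
      = ∑ b ∈ (univ : Finset (Fin n)).powersetCard c,
        (if b ⊆ K then (K.card - c) • F b else 0) := by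
    apply Finset.sum_congr rfl
    intro b hb
    rw [Finset.mem_powersetCard_univ] at hb
    rw [Finset.sum_const, he b hb]
    by_cases hbK : b ⊆ K
    · rw [if_pos hbK, card_filter_between b K hbK, hb]
    · rw [if_neg hbK, card_filter_between' hbK, Finset.card_empty, zero_smul]
  rw [h2, ← Finset.sum_filter, ← powersetCard_eq_filter K c, Finset.smul_sum]

/-- Sum over `m`-subsets as a subtype sum. -/
lemma sum_VSet {m : ℕ} (G : Finset (Fin n) → ℂ) :
    ∑ k : VSet n m, G k.1 = ∑ K ∈ (univ : Finset (Fin n)).powersetCard m, G K :=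
  (Finset.sum_subtype _ (fun _ => Finset.mem_powersetCard_univ) G).symm

/-- The sesquilinear-form kernel submodule. -/
noncomputable def kerB {m : ℕ} (f : VSet n m → ℂ) : Submodule ℂ (VSet n m → ℂ) where
  carrier := {h | ∑ k : VSet n m, (starRingEnd ℂ) (f k) * h k = 0}
  add_mem' := by
    intro h1 h2 hh1 hh2
    simp only [Set.mem_setOf_eq] at *
    simp [Pi.add_apply, mul_add, Finset.sum_add_distrib, hh1, hh2]
  zero_mem' := by simp
  smul_mem' := by
    intro c h hh
    simp only [Set.mem_setOf_eq] at *
    have : ∀ k : VSet n m, (starRingEnd ℂ) (f k) * (c • h) k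
        = c * ((starRingEnd ℂ) (f k) * h k) := by
      intro k; simp [Pi.smul_apply, smul_eq_mul]; ring
    rw [Finset.sum_congr rfl (fun k _ => this k), ← Finset.mul_sum, hh, mul_zero]

lemma mem_kerB {m : ℕ} (f h : VSet n m → ℂ) :
    h ∈ kerB f ↔ ∑ k : VSet n m, (starRingEnd ℂ) (f k) * h k = 0 := Iff.rfl

lemma hoeff_le_kerB {m a b : ℕ} (hab : a < b) (φ : Finset (Fin n) → ℂ) :
    HoeffSpace n m b ≤ kerB (fun k : VSet n m => ∑ i ∈ k.1.powersetCard a, φ i) := by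
  rw [HoeffSpace, if_neg (by omega : b ≠ 0)]
  apply Submodule.span_le.mpr
  rintro h ⟨ψ, hψ, hrep⟩
  rw [SetLike.mem_coe, mem_kerB]
  have h1 : ∀ k : VSet n m,
      (starRingEnd ℂ) (∑ i ∈ k.1.powersetCard a, φ i) * h k
      = (∑ i ∈ k.1.powersetCard a, (starRingEnd ℂ) (φ i))
          * (∑ j ∈ k.1.powersetCard b, ψ j) := by
    intro k; rw [hrep k, map_sum]
  rw [Finset.sum_congr rfl (fun k _ => h1 k),
    sum_VSet (fun K => (∑ i ∈ K.powersetCard a, (starRingEnd ℂ) (φ i))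
      * (∑ j ∈ K.powersetCard b, ψ j))]
  exact ortho_lift hab _ ψ hψ

/-- One-sided orthogonality. -/
lemma BF_eq_zero_lt {m a b : ℕ} (hab : a < b) {f h : VSet n m → ℂ}
    (hf : f ∈ HoeffSpace n m a) (hh : h ∈ HoeffSpace n m b) :
    ∑ k : VSet n m, (starRingEnd ℂ) (f k) * h k = 0 := by
  have hgen : ∀ f0 ∈ (if a = 0 then {(fun _ => (1 : ℂ) : VSet n m → ℂ)}
      else {f : VSet n m → ℂ | ∃ φ : Finset (Fin n) → ℂ, degenKer n a φ ∧
        ∀ k : VSet n m, f k = ∑ i ∈ k.1.powersetCard a, φ i} : Set (VSet n m → ℂ)),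
      ∑ k : VSet n m, (starRingEnd ℂ) (f0 k) * h k = 0 := by
    intro f0 hf0
    by_cases ha : a = 0
    · rw [if_pos ha] at hf0
      rw [Set.mem_singleton_iff] at hf0
      subst hf0 ha
      have : (fun _ => (1 : ℂ) : VSet n m → ℂ)
          = fun k : VSet n m => ∑ i ∈ k.1.powersetCard 0, (fun _ => (1:ℂ)) i := by
        funext k; rw [Finset.powersetCard_zero, Finset.sum_singleton]
      rw [this]
      exact hoeff_le_kerB hab (fun _ => (1:ℂ)) hh
    · rw [if_neg ha] at hf0
      obtain ⟨φ, _, hrep⟩ := hf0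
      have : f0 = fun k : VSet n m => ∑ i ∈ k.1.powersetCard a, φ i := funext hrep
      rw [this]
      exact hoeff_le_kerB hab φ hh
  have hfa : f ∈ Submodule.span ℂ (if a = 0 then {(fun _ => (1 : ℂ) : VSet n m → ℂ)}
      else {f : VSet n m → ℂ | ∃ φ : Finset (Fin n) → ℂ, degenKer n a φ ∧
        ∀ k : VSet n m, f k = ∑ i ∈ k.1.powersetCard a, φ i} : Set (VSet n m → ℂ)) := by
    rw [HoeffSpace] at hf
    split_ifs with ha
    · rwa [if_pos ha] at hf
    · rwa [if_neg ha] at hf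
  clear hf
  induction hfa using Submodule.span_induction with
  | mem f0 hf0 => exact hgen f0 hf0
  | zero => simp
  | add f1 f2 _ _ h1 h2 =>
    have : ∀ k : VSet n m, (starRingEnd ℂ) ((f1 + f2) k) * h k
        = (starRingEnd ℂ) (f1 k) * h k + (starRingEnd ℂ) (f2 k) * h k := by
      intro k; rw [Pi.add_apply, map_add, add_mul]
    rw [Finset.sum_congr rfl (fun k _ => this k), Finset.sum_add_distrib, h1, h2, add_zero]
  | smul c f1 _ h1 =>
    have : ∀ k : VSet n m, (starRingEnd ℂ) ((c • f1) k) * h k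
        = (starRingEnd ℂ) c * ((starRingEnd ℂ) (f1 k) * h k) := by
      intro k; rw [Pi.smul_apply, smul_eq_mul, map_mul]; ring
    rw [Finset.sum_congr rfl (fun k _ => this k), ← Finset.mul_sum, h1, mul_zero]

/-- Orthogonality of distinct Hoeffding spaces. -/
lemma BF_eq_zero {m a b : ℕ} (hab : a ≠ b) {f h : VSet n m → ℂ}
    (hf : f ∈ HoeffSpace n m a) (hh : h ∈ HoeffSpace n m b) :
    ∑ k : VSet n m, (starRingEnd ℂ) (f k) * h k = 0 := by
  rcases lt_or_gt_of_ne hab with hlt | hgt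
  · exact BF_eq_zero_lt hlt hf hh
  · have h1 := BF_eq_zero_lt hgt hh hf
    have h2 : ∑ k : VSet n m, (starRingEnd ℂ) (f k) * h k
        = (starRingEnd ℂ) (∑ k : VSet n m, (starRingEnd ℂ) (h k) * f k) := by
      rw [map_sum]
      apply Finset.sum_congr rfl
      intro k _
      rw [map_mul, Complex.conj_conj, mul_comm]
    rw [h2, h1, map_zero]

lemma mem_hoeff_lift {m l : ℕ} (hl : l ≠ 0) (φ : Finset (Fin n) → ℂ)
    (hφ : degenKer n l φ) :
    (fun k : VSet n m => ∑ i ∈ k.1.powersetCard l, φ i) ∈ HoeffSpace n m l := by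
  rw [HoeffSpace, if_neg hl]
  exact Submodule.subset_span ⟨φ, hφ, fun k => rfl⟩

/-- Every lift of a kernel of order `l ≤ m` lies in the sum of the Hoeffding spaces. -/
lemma lift_mem_iSup {m : ℕ} :
    ∀ l, l ≤ m → ∀ φ : Finset (Fin n) → ℂ,
    (fun k : VSet n m => ∑ i ∈ k.1.powersetCard l, φ i)
      ∈ ⨆ l' : Fin (m+1), HoeffSpace n m ↑l' := by
  intro l
  induction l with
  | zero =>
    intro _ φ
    have heq : (fun k : VSet n m => ∑ i ∈ k.1.powersetCard 0, φ i)
        = φ ∅ • (fun _ => (1:ℂ) : VSet n m → ℂ) := by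
      funext k
      rw [Finset.powersetCard_zero, Finset.sum_singleton, Pi.smul_apply, smul_eq_mul, mul_one]
    rw [heq]
    apply Submodule.smul_mem
    apply Submodule.mem_iSup_of_mem (0 : Fin (m+1))
    have h0 : ((0 : Fin (m+1)) : ℕ) = 0 := rfl
    rw [h0, HoeffSpace, if_pos rfl]
    exact Submodule.subset_span rfl
  | succ l ih =>
    intro hl φ
    obtain ⟨φ₁, χ, hdeg, hrep⟩ := exists_decomp l φ
    have heq : (fun k : VSet n m => ∑ i ∈ k.1.powersetCard (l+1), φ i)
        = (fun k : VSet n m => ∑ i ∈ k.1.powersetCard (l+1), φ₁ i)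
          + ((m - l : ℕ) : ℂ) • (fun k : VSet n m => ∑ s ∈ k.1.powersetCard l, χ s) := by
      funext k
      rw [Pi.add_apply, Pi.smul_apply, smul_eq_mul]
      have h1 : ∀ i ∈ k.1.powersetCard (l+1), φ i = φ₁ i + ∑ s ∈ i.powersetCard l, χ s :=
        fun i hi => hrep i (Finset.mem_powersetCard.mp hi).2
      rw [Finset.sum_congr rfl h1, Finset.sum_add_distrib, sum_sum_powersetCard k.1 l χ, k.2,
        nsmul_eq_mul]
    rw [heq]
    apply Submodule.add_mem
    · have hmem : (fun k : VSet n m => ∑ i ∈ k.1.powersetCard (l+1), φ₁ i)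
          ∈ HoeffSpace n m (l+1) := mem_hoeff_lift (Nat.succ_ne_zero l) φ₁ hdeg
      exact Submodule.mem_iSup_of_mem (⟨l+1, by omega⟩ : Fin (m+1)) hmem
    · exact Submodule.smul_mem _ _ (ih (by omega) χ)

lemma indic_eq_lift {m : ℕ} (j : VSet n m) :
    indic j = fun k : VSet n m =>
      ∑ i ∈ k.1.powersetCard m, (fun i => if i = j.1 then (1:ℂ) else 0) i := by
  funext k
  have hps := Finset.powersetCard_self k.1
  rw [k.2] at hps
  rw [hps, Finset.sum_singleton, indic]
  by_cases h : k = j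
  · rw [if_pos h, if_pos (by rw [h])]
  · rw [if_neg h, if_neg (fun hc => h (Subtype.ext hc))]

lemma hoeff_iSup_eq_top {m : ℕ} :
    (⨆ l' : Fin (m+1), HoeffSpace n m ↑l') = ⊤ := by
  rw [eq_top_iff]
  intro f _
  have heq : f = ∑ j : VSet n m, f j • indic j := by
    funext k
    rw [Finset.sum_apply]
    have h1 : ∀ j : VSet n m, (f j • indic j) k = if k = j then f j else 0 := by
      intro j
      rw [Pi.smul_apply, smul_eq_mul, indic]
      by_cases h : k = j
      · rw [if_pos h, if_pos h, mul_one]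
      · rw [if_neg h, if_neg h, mul_zero]
    rw [Finset.sum_congr rfl (fun j _ => h1 j)]
    simp
  rw [heq]
  apply Submodule.sum_mem
  intro j _
  apply Submodule.smul_mem
  rw [indic_eq_lift j]
  exact lift_mem_iSup m le_rfl _

/-- Image of a complement under a permutation. -/
lemma image_compl (e : Equiv.Perm (Fin n)) (j : Finset (Fin n)) :
    jᶜ.image e = (j.image e)ᶜ := by
  ext b
  simp only [Finset.mem_image, Finset.mem_compl]
  constructor
  · rintro ⟨a, ha, rfl⟩ ⟨a', ha', h⟩
    exact ha (e.injective h ▸ ha')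
  · intro hb
    exact ⟨e⁻¹ b, fun hc => hb ⟨e⁻¹ b, hc, by simp⟩, by simp⟩

lemma degen_perm {l : ℕ} {φ : Finset (Fin n) → ℂ} (hφ : degenKer n l φ)
    (e : Equiv.Perm (Fin n)) : degenKer n l (fun i => φ (i.image e)) := by
  intro j hj
  have h1 : ∀ a ∈ jᶜ, φ ((insert a j).image e) = φ (insert (e a) (j.image e)) := by
    intro a _; rw [Finset.image_insert]
  rw [Finset.sum_congr rfl h1]
  calc ∑ a ∈ jᶜ, φ (insert (e a) (j.image e))
      = ∑ b ∈ jᶜ.image e, φ (insert b (j.image e)) :=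
        (Finset.sum_image (f := fun b => φ (insert b (j.image e))) (g := ⇑e)
          (fun a _ a' _ h => e.injective h)).symm
    _ = 0 := by
        rw [image_compl]
        exact hφ (j.image e)
          (by rw [Finset.card_image_of_injective _ e.injective]; exact hj)

lemma perm_powersetCard_sum (e : Equiv.Perm (Fin n)) (K : Finset (Fin n)) (l : ℕ)
    (F : Finset (Fin n) → ℂ) :
    ∑ i ∈ (K.image e).powersetCard l, F i = ∑ i ∈ K.powersetCard l, F (i.image e) := by
  have hinv1 : ∀ s : Finset (Fin n), (s.image ⇑e⁻¹).image ⇑e = s := by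
    intro s; ext a; simp
  have hinv2 : ∀ s : Finset (Fin n), (s.image ⇑e).image ⇑e⁻¹ = s := by
    intro s; ext a; simp
  apply Finset.sum_nbij' (fun i => i.image ⇑e⁻¹) (fun i => i.image ⇑e)
  · intro i hi
    rw [Finset.mem_powersetCard] at hi ⊢
    constructor
    · intro x hx
      obtain ⟨y, hy, rfl⟩ := Finset.mem_image.mp hx
      obtain ⟨z, hz, rfl⟩ := Finset.mem_image.mp (hi.1 hy)
      simpa using hz
    · rw [Finset.card_image_of_injective _ (Equiv.injective e⁻¹), hi.2]
  · intro i hi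
    rw [Finset.mem_powersetCard] at hi ⊢
    exact ⟨Finset.image_subset_image hi.1, by
      rw [Finset.card_image_of_injective _ e.injective, hi.2]⟩
  · intro i _
    exact hinv1 i
  · intro i _
    exact hinv2 i
  · intro i _
    rw [hinv1 i]

/-- Invariance of the Hoeffding spaces under the symmetric group action. -/
lemma hoeff_perm_invariant {m l : ℕ} (x : Equiv.Perm (Fin n)) (f : VSet n m → ℂ)
    (hf : f ∈ HoeffSpace n m l) : permAct x f ∈ HoeffSpace n m l := by
  by_cases hl : l = 0
  · subst hl
    rw [HoeffSpace, if_pos rfl] at hf ⊢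
    induction hf using Submodule.span_induction with
    | mem f0 hf0 =>
      rw [Set.mem_singleton_iff] at hf0
      subst hf0
      exact Submodule.subset_span rfl
    | zero => exact Submodule.zero_mem _
    | add f1 f2 _ _ h1 h2 => exact Submodule.add_mem _ h1 h2
    | smul c f1 _ h1 => exact Submodule.smul_mem _ c h1
  · rw [HoeffSpace, if_neg hl] at hf ⊢
    induction hf using Submodule.span_induction with
    | mem f0 hf0 =>
      obtain ⟨φ, hφ, hrep⟩ := hf0
      apply Submodule.subset_span
      refine ⟨fun i => φ (i.image ⇑x⁻¹), degen_perm hφ x⁻¹, ?_⟩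
      intro k
      show f0 (permSub x⁻¹ k) = _
      rw [hrep (permSub x⁻¹ k)]
      exact perm_powersetCard_sum x⁻¹ k.1 l φ
    | zero => exact Submodule.zero_mem _
    | add f1 f2 _ _ h1 h2 => exact Submodule.add_mem _ h1 h2
    | smul c f1 _ h1 => exact Submodule.smul_mem _ c h1

end HoeffAux

/-- Hoeffding decomposition: `L(V^{(n-m,m)}) = W₀ ⊕ W₁ ⊕ ⋯ ⊕ W_m`, an orthogonal
direct sum for the inner product `⟨f,h⟩ = C(n,m)⁻¹ ∑_k f(k) conj(h(k))`, with each
`W_l` invariant under the `S_n`-action `(x·f)(k) = f(x⁻¹·k)`. -/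
theorem hoeffding_decomposition (n m : ℕ) (hn : 2 ≤ n) (hm1 : 1 ≤ m)
    (hm : 2 * m ≤ n) :
    DirectSum.IsInternal (fun l : Fin (m + 1) => HoeffSpace n m l) ∧
    (∀ i j : Fin (m + 1), i ≠ j →
      ∀ f ∈ HoeffSpace n m i, ∀ h ∈ HoeffSpace n m j,
        (Nat.choose n m : ℂ)⁻¹ *
          ∑ k : VSet n m, f k * (starRingEnd ℂ) (h k) = 0) ∧
    (∀ (l : Fin (m + 1)) (x : Equiv.Perm (Fin n)) (f : VSet n m → ℂ),
      f ∈ HoeffSpace n m l → permAct x f ∈ HoeffSpace n m l) := by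
  refine ⟨?_, ?_, ?_⟩
  · rw [DirectSum.isInternal_submodule_iff_iSupIndep_and_iSup_eq_top]
    constructor
    · rw [iSupIndep_def]
      intro i
      rw [Submodule.disjoint_def]
      intro f hfi hfs
      have hker : (⨆ j, ⨆ (_ : j ≠ i), HoeffSpace n m ↑j) ≤ HoeffAux.kerB f := by
        refine iSup_le fun j => iSup_le fun hji => ?_
        intro h hh
        have hne : (i : ℕ) ≠ (j : ℕ) := fun hv => hji (Fin.ext hv.symm)
        exact (HoeffAux.mem_kerB f h).mpr (HoeffAux.BF_eq_zero hne hfi hh)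
      have h0 : ∑ k : VSet n m, (starRingEnd ℂ) (f k) * f k = 0 :=
        (HoeffAux.mem_kerB f f).mp (hker hfs)
      have h1 : ∑ k : VSet n m, (Complex.normSq (f k) : ℂ) = 0 := by
        rw [← h0]
        exact Finset.sum_congr rfl fun k _ => Complex.normSq_eq_conj_mul_self
      have h2 : ∑ k : VSet n m, Complex.normSq (f k) = 0 := by exact_mod_cast h1
      funext k
      have h3 := (Finset.sum_eq_zero_iff_of_nonneg
        (fun k _ => Complex.normSq_nonneg (f k))).mp h2 k (Finset.mem_univ k)
      exact Complex.normSq_eq_zero.mp h3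
    · exact HoeffAux.hoeff_iSup_eq_top
  · intro i j hij f hf h hh
    have h1 : ∑ k : VSet n m, f k * (starRingEnd ℂ) (h k)
        = (starRingEnd ℂ) (∑ k : VSet n m, (starRingEnd ℂ) (f k) * h k) := by
      rw [map_sum]
      exact Finset.sum_congr rfl fun k _ => by rw [map_mul, Complex.conj_conj]
    have hne : (i : ℕ) ≠ (j : ℕ) := fun hv => hij (Fin.ext hv)
    rw [h1, HoeffAux.BF_eq_zero hne hf hh, map_zero, mul_zero]
  · intro l x f hf
    exact HoeffAux.hoeff_perm_invariant x f hf
end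

section
/- Let n ≥ 2 and 1 ≤ l ≤ m ≤ n/2. The dimension of the l-th symmetric Hoeffding space W_l — the space of functions on m-subsets of {1,...,n} of the form f(k) = ∑_{i ⊆ k, |i|=l} φ(i) with φ completely degenerate of order l — equals C(n,l) - C(n,l-1). -/
open Finset

set_option synthInstance.maxHeartbeats 1000000
set_option maxHeartbeats 1000000

namespace Hoeff

variable {n : ℕ}

abbrev G (n : ℕ) := Finset (Fin n) → ℂ

noncomputable def pairB (f g : G n) : ℂ := ∑ s, f s * (starRingEnd ℂ) (g s)

noncomputable def upM (n : ℕ) : G n →ₗ[ℂ] G n where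
  toFun f := fun s => ∑ b ∈ s, f (s.erase b)
  map_add' f g := funext fun s => by simp [Finset.sum_add_distrib]
  map_smul' c f := funext fun s => by simp [Finset.mul_sum]

noncomputable def downM (n : ℕ) : G n →ₗ[ℂ] G n where
  toFun f := fun j => ∑ a ∈ jᶜ, f (insert a j)
  map_add' f g := funext fun j => by simp [Finset.sum_add_distrib]
  map_smul' c f := funext fun j => by simp [Finset.mul_sum]

lemma upM_apply (f : G n) (s : Finset (Fin n)) : upM n f s = ∑ b ∈ s, f (s.erase b) := rfl
lemma downM_apply (f : G n) (j : Finset (Fin n)) : downM n f j = ∑ a ∈ jᶜ, f (insert a j) := rfl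

lemma pair_up (f g : G n) : pairB (upM n f) g = pairB f (downM n g) := by
  unfold pairB
  simp only [upM_apply, downM_apply, Finset.sum_mul, map_sum, Finset.mul_sum]
  rw [show (∑ s : Finset (Fin n), ∑ b ∈ s, f (s.erase b) * (starRingEnd ℂ) (g s))
      = ∑ x ∈ (univ : Finset (Finset (Fin n))).sigma (fun s => s),
          f (x.1.erase x.2) * (starRingEnd ℂ) (g x.1) from
    (Finset.sum_sigma' _ _ _)]
  rw [show (∑ j : Finset (Fin n), ∑ a ∈ jᶜ, f j * (starRingEnd ℂ) (g (insert a j)))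
      = ∑ x ∈ (univ : Finset (Finset (Fin n))).sigma (fun j => jᶜ),
          f x.1 * (starRingEnd ℂ) (g (insert x.2 x.1)) from
    (Finset.sum_sigma' _ _ _)]
  refine Finset.sum_nbij' (fun x => ⟨x.1.erase x.2, x.2⟩) (fun x => ⟨insert x.2 x.1, x.2⟩)
    ?_ ?_ ?_ ?_ ?_
  · rintro ⟨s, b⟩ h
    simp only [Finset.mem_sigma, Finset.mem_univ, true_and] at h ⊢
    simp [Finset.mem_compl]
  · rintro ⟨j, a⟩ h
    simp only [Finset.mem_sigma, Finset.mem_univ, true_and] at h ⊢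
    simp
  · rintro ⟨s, b⟩ h
    simp only [Finset.mem_sigma, Finset.mem_univ, true_and] at h
    simp [Finset.insert_erase h]
  · rintro ⟨j, a⟩ h
    simp only [Finset.mem_sigma, Finset.mem_univ, true_and, Finset.mem_compl] at h
    simp [Finset.erase_insert h]
  · rintro ⟨s, b⟩ h
    simp only [Finset.mem_sigma, Finset.mem_univ, true_and] at h
    simp [Finset.insert_erase h]

lemma pairB_comm (f g : G n) : pairB g f = (starRingEnd ℂ) (pairB f g) := by
  unfold pairB
  rw [map_sum]
  exact Finset.sum_congr rfl fun s _ => by rw [map_mul, RingHomCompTriple.comp_apply,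
    RingHom.id_apply, mul_comm]

lemma pair_down (f g : G n) : pairB f (upM n g) = pairB (downM n f) g := by
  rw [pairB_comm, pair_up, ← pairB_comm]

lemma pairB_self (f : G n) : pairB f f = ((∑ s, Complex.normSq (f s) : ℝ) : ℂ) := by
  unfold pairB
  push_cast
  exact Finset.sum_congr rfl fun s _ => (Complex.mul_conj (f s))

lemma eq_zero_of_pairB_self (f : G n) (h : pairB f f = 0) : f = 0 := by
  rw [pairB_self] at h
  have h2 : (∑ s, Complex.normSq (f s) : ℝ) = 0 := by exact_mod_cast h
  have h3 := (Finset.sum_eq_zero_iff_of_nonneg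
    (fun s _ => Complex.normSq_nonneg (f s))).mp h2
  funext s
  exact Complex.normSq_eq_zero.mp (h3 s (Finset.mem_univ s))

lemma down_up_apply (f : G n) (s : Finset (Fin n)) :
    downM n (upM n f) s = upM n (downM n f) s + ((n : ℂ) - 2 * s.card) * f s := by
  have hs : s.card ≤ n := by simpa using Finset.card_le_univ s
  have L : downM n (upM n f) s
      = ∑ a ∈ sᶜ, (f s + ∑ b ∈ s, f (insert a (s.erase b))) := by
    rw [downM_apply]
    refine Finset.sum_congr rfl fun a ha => ?_
    have ha' : a ∉ s := Finset.mem_compl.mp ha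
    rw [upM_apply, Finset.sum_insert ha', Finset.erase_insert ha']
    congr 1
    refine Finset.sum_congr rfl fun b hb => ?_
    have : a ≠ b := fun h => ha' (h ▸ hb)
    rw [Finset.erase_insert_of_ne this]
  have R : upM n (downM n f) s
      = ∑ b ∈ s, (f s + ∑ a ∈ sᶜ, f (insert a (s.erase b))) := by
    rw [upM_apply]
    refine Finset.sum_congr rfl fun b hb => ?_
    rw [downM_apply, Finset.compl_erase, Finset.sum_insert (by simp [hb]),
      Finset.insert_erase hb]
  rw [L, R, Finset.sum_add_distrib, Finset.sum_add_distrib, Finset.sum_const,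
    Finset.sum_const, Finset.card_compl, Finset.sum_comm]
  simp only [Fintype.card_fin, nsmul_eq_mul]
  rw [Nat.cast_sub hs]
  ring

/-- The level-`k` subspace. -/
noncomputable def Lk (n k : ℕ) : Submodule ℂ (G n) where
  carrier := {f | ∀ s : Finset (Fin n), s.card ≠ k → f s = 0}
  add_mem' := fun hf hg s hs => by simp [hf s hs, hg s hs]
  zero_mem' := fun s _ => rfl
  smul_mem' := fun c f hf s hs => by simp [hf s hs]

lemma mem_Lk {k : ℕ} {f : G n} : f ∈ Lk n k ↔ ∀ s : Finset (Fin n), s.card ≠ k → f s = 0 :=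
  Iff.rfl

lemma up_mem {k : ℕ} {f : G n} (hf : f ∈ Lk n k) : upM n f ∈ Lk n (k + 1) := by
  intro s hs
  rw [upM_apply]
  refine Finset.sum_eq_zero fun b hb => hf _ fun hE => hs ?_
  have h1 := Finset.card_erase_of_mem hb
  have h2 : 1 ≤ s.card := Finset.card_pos.mpr ⟨b, hb⟩
  omega

lemma down_mem {k : ℕ} {f : G n} (hf : f ∈ Lk n (k + 1)) : downM n f ∈ Lk n k := by
  intro j hj
  rw [downM_apply]
  refine Finset.sum_eq_zero fun a ha => hf _ fun hE => hj ?_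
  rw [Finset.card_insert_of_notMem (Finset.mem_compl.mp ha)] at hE
  omega

lemma up_inj {k : ℕ} (hk : 2 * k < n) {f : G n} (hf : f ∈ Lk n k) (h : upM n f = 0) :
    f = 0 := by
  have h1 : pairB (upM n f) (upM n f) = 0 := by rw [h]; simp [pairB]
  rw [pair_up] at h1
  have h2 : pairB f (downM n (upM n f))
      = pairB (downM n f) (downM n f)
        + ∑ s, ((n : ℂ) - 2 * s.card) * (f s * (starRingEnd ℂ) (f s)) := by
    rw [← pair_down]
    unfold pairB
    rw [← Finset.sum_add_distrib]
    refine Finset.sum_congr rfl fun s _ => ?_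
    rw [down_up_apply]
    have : (starRingEnd ℂ) ((n : ℂ) - 2 * s.card) = ((n : ℂ) - 2 * s.card) := by
      rw [show ((n : ℂ) - 2 * s.card) = (((n : ℝ) - 2 * s.card : ℝ) : ℂ) by push_cast; ring,
        Complex.conj_ofReal]
    rw [map_add, map_mul, this]
    ring
  have h3 : ∑ s, ((n : ℂ) - 2 * s.card) * (f s * (starRingEnd ℂ) (f s))
      = ((n : ℂ) - 2 * k) * pairB f f := by
    unfold pairB
    rw [Finset.mul_sum]
    refine Finset.sum_congr rfl fun s _ => ?_
    by_cases hfs : f s = 0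
    · simp [hfs]
    · have : s.card = k := by by_contra hc; exact hfs (hf s hc)
      rw [this]
  rw [h2, h3, pairB_self, pairB_self] at h1
  have hcast : ((n : ℂ) - 2 * k) = (((n : ℝ) - 2 * k : ℝ) : ℂ) := by push_cast; ring
  rw [hcast, ← Complex.ofReal_mul, ← Complex.ofReal_add] at h1
  have h4 : (∑ s, Complex.normSq (downM n f s))
      + ((n : ℝ) - 2 * k) * (∑ s, Complex.normSq (f s)) = 0 := by exact_mod_cast h1
  have hA : 0 ≤ ∑ s, Complex.normSq (downM n f s) :=
    Finset.sum_nonneg fun s _ => Complex.normSq_nonneg _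
  have hB : 0 ≤ ∑ s, Complex.normSq (f s) :=
    Finset.sum_nonneg fun s _ => Complex.normSq_nonneg _
  have hc : (0 : ℝ) < (n : ℝ) - 2 * k := by
    have : (2 * k : ℝ) < n := by exact_mod_cast hk
    linarith
  have hB0 : (∑ s, Complex.normSq (f s)) = 0 := by nlinarith
  have := (Finset.sum_eq_zero_iff_of_nonneg
    (fun s _ => Complex.normSq_nonneg (f s))).mp hB0
  funext s
  exact Complex.normSq_eq_zero.mp (this s (Finset.mem_univ s))

/-- `Lk n k` is isomorphic to functions on `k`-subsets. -/
noncomputable def lkEquiv (n k : ℕ) : (Lk n k) ≃ₗ[ℂ] (VSet n k → ℂ) where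
  toFun f := fun s => f.1 s.1
  map_add' _ _ := rfl
  map_smul' _ _ := rfl
  invFun ψ := ⟨fun t => if h : t.card = k then ψ ⟨t, h⟩ else 0, fun s hs => dif_neg hs⟩
  left_inv f := Subtype.ext (funext fun t => by
    by_cases h : t.card = k
    · simp [h]
    · simp [h, f.2 t h])
  right_inv ψ := funext fun s => by simp [s.2]

lemma finrank_Lk (n k : ℕ) : Module.finrank ℂ (Lk n k) = n.choose k := by
  rw [(lkEquiv n k).finrank_eq, Module.finrank_fintype_fun_eq_card,
    Fintype.card_finset_len, Fintype.card_fin]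

lemma finrank_ker_down (n l : ℕ) (hl : 1 ≤ l) (hln : 2 * (l - 1) < n) :
    Module.finrank ℂ ↥(Lk n l ⊓ LinearMap.ker (downM n)) = n.choose l - n.choose (l - 1) := by
  obtain ⟨l', rfl⟩ : ∃ l', l = l' + 1 := ⟨l - 1, by omega⟩
  rw [Nat.succ_sub_one] at hln ⊢
  have hD : ∀ x ∈ Lk n (l' + 1), downM n x ∈ Lk n l' := fun x hx => down_mem hx
  have hU : ∀ x ∈ Lk n l', upM n x ∈ Lk n (l' + 1) := fun x hx => up_mem hx
  set Dl := (downM n).restrict hD with hDl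
  set Ul := (upM n).restrict hU with hUl
  have hUinj : Function.Injective Ul := by
    rw [← LinearMap.ker_eq_bot, LinearMap.ker_eq_bot']
    intro x hx
    have hx' : upM n x.1 = 0 := by
      have := congrArg Subtype.val hx
      rwa [LinearMap.restrict_coe_apply] at this
    exact Subtype.ext (up_inj hln x.2 hx')
  have hdisj : LinearMap.ker Dl ⊓ LinearMap.range Ul = ⊥ := by
    rw [eq_bot_iff]
    rintro x ⟨hx1, g, hg⟩
    have hx1' : downM n x.1 = 0 := by
      have := congrArg Subtype.val (LinearMap.mem_ker.mp hx1)
      rwa [LinearMap.restrict_coe_apply] at this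
    have hg' : upM n g.1 = x.1 := by
      have := congrArg Subtype.val hg
      rwa [LinearMap.restrict_coe_apply] at this
    have hpz : pairB x.1 x.1 = 0 := by
      rw [← hg', pair_up, hg', hx1']
      simp [pairB]
    have := eq_zero_of_pairB_self _ hpz
    simpa [Submodule.mem_bot] using Subtype.ext this
  have c1 := LinearMap.finrank_range_add_finrank_ker Dl
  rw [finrank_Lk] at c1
  have c2 : Module.finrank ℂ ↥(LinearMap.range Dl) ≤ n.choose l' := by
    rw [← finrank_Lk n l']
    exact Submodule.finrank_le _
  have c3 : Module.finrank ℂ ↥(LinearMap.range Ul) = n.choose l' := by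
    rw [LinearMap.finrank_range_of_inj hUinj, finrank_Lk]
  have c4 := Submodule.finrank_sup_add_finrank_inf_eq (LinearMap.ker Dl) (LinearMap.range Ul)
  rw [hdisj, finrank_bot] at c4
  have c5 : Module.finrank ℂ ↥(LinearMap.ker Dl ⊔ LinearMap.range Ul) ≤ n.choose (l' + 1) := by
    rw [← finrank_Lk n (l' + 1)]
    exact Submodule.finrank_le _
  have hcomap : Submodule.comap (Lk n (l' + 1)).subtype (Lk n (l' + 1) ⊓ LinearMap.ker (downM n))
      = LinearMap.ker Dl := by
    rw [Submodule.comap_inf, Submodule.comap_subtype_self, LinearMap.ker_restrict]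
    simp
  have heq : Module.finrank ℂ ↥(Lk n (l' + 1) ⊓ LinearMap.ker (downM n))
      = Module.finrank ℂ ↥(LinearMap.ker Dl) := by
    rw [← hcomap]
    exact (LinearEquiv.finrank_eq (Submodule.comapSubtypeEquivOfLe
      (inf_le_left : Lk n (l' + 1) ⊓ LinearMap.ker (downM n) ≤ Lk n (l' + 1)))).symm
  rw [heq]
  omega

noncomputable def Jm (n l : ℕ) : G n →ₗ[ℂ] G n where
  toFun f := fun t => ∑ i ∈ t.powersetCard l, f i
  map_add' f g := funext fun t => by simp [Finset.sum_add_distrib]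
  map_smul' c f := funext fun t => by simp [Finset.mul_sum]

lemma Jm_apply (l : ℕ) (f : G n) (t : Finset (Fin n)) :
    Jm n l f t = ∑ i ∈ t.powersetCard l, f i := rfl

lemma up_J (l : ℕ) (f : G n) (t : Finset (Fin n)) :
    upM n (Jm n l f) t = ((t.card - l : ℕ) : ℂ) * Jm n l f t := by
  rw [upM_apply]
  have hpc : ∀ b, (t.erase b).powersetCard l
      = (t.powersetCard l).filter (fun i => b ∉ i) := by
    intro b
    ext i
    simp only [Finset.mem_powersetCard, Finset.mem_filter, Finset.subset_erase]
    tauto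
  calc ∑ b ∈ t, Jm n l f (t.erase b)
      = ∑ b ∈ t, ∑ i ∈ t.powersetCard l, if b ∉ i then f i else 0 := by
        refine Finset.sum_congr rfl fun b _ => ?_
        rw [Jm_apply, hpc b, Finset.sum_filter]
    _ = ∑ i ∈ t.powersetCard l, ∑ b ∈ t, if b ∉ i then f i else 0 := Finset.sum_comm
    _ = ∑ i ∈ t.powersetCard l, ((t.card - l : ℕ) : ℂ) * f i := by
        refine Finset.sum_congr rfl fun i hi => ?_
        rw [← Finset.sum_filter]
        obtain ⟨hsub, hcard⟩ := Finset.mem_powersetCard.mp hi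
        rw [show t.filter (fun b => b ∉ i) = t \ i from (Finset.sdiff_eq_filter t i).symm,
          Finset.sum_const, Finset.card_sdiff_of_subset hsub, hcard, nsmul_eq_mul]
    _ = ((t.card - l : ℕ) : ℂ) * Jm n l f t := by rw [Jm_apply, Finset.mul_sum]

lemma J_vanish (l : ℕ) (f : G n) (hf : f ∈ Lk n l) :
    ∀ d : ℕ, 2 * (l + d) ≤ n → (∀ t : Finset (Fin n), t.card = l + d → Jm n l f t = 0) →
    f = 0 := by
  intro d
  induction d with
  | zero =>
    intro _ hv
    funext t
    by_cases ht : t.card = l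
    · have := hv t (by omega)
      rw [Jm_apply, ← ht, Finset.powersetCard_self, Finset.sum_singleton] at this
      exact this
    · exact hf t ht
  | succ d ih =>
    intro hle hv
    refine ih (by omega) fun t ht => ?_
    set g : G n := fun u => if u.card = l + d then Jm n l f u else 0 with hg
    have hgmem : g ∈ Lk n (l + d) := fun u hu => if_neg hu
    have hupg : upM n g = 0 := by
      funext u
      rw [upM_apply]
      by_cases hu : u.card = l + d + 1
      · have : ∀ b ∈ u, g (u.erase b) = Jm n l f (u.erase b) := by
          intro b hb
          exact if_pos (by rw [Finset.card_erase_of_mem hb, hu]; omega)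
        rw [Finset.sum_congr rfl this, ← upM_apply, up_J, hv u hu, mul_zero]
        rfl
      · refine Finset.sum_eq_zero fun b hb => if_neg fun hE => hu ?_
        have h1 := Finset.card_erase_of_mem hb
        have h2 : 1 ≤ u.card := Finset.card_pos.mpr ⟨b, hb⟩
        omega
    have hg0 : g = 0 := up_inj (by omega) hgmem hupg
    have hgt : g t = Jm n l f t := if_pos ht
    rw [← hgt, hg0]
    rfl

noncomputable def Tm (n m l : ℕ) : G n →ₗ[ℂ] (VSet n m → ℂ) where
  toFun f := fun k => ∑ i ∈ k.1.powersetCard l, f i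
  map_add' f g := funext fun k => by simp [Finset.sum_add_distrib]
  map_smul' c f := funext fun k => by simp [Finset.mul_sum]

lemma Tm_apply (m l : ℕ) (f : G n) (k : VSet n m) :
    Tm n m l f k = Jm n l f k.1 := rfl

end Hoeff

/-- The `l`-th symmetric Hoeffding space dimension theorem. -/
theorem hoeffding_space_dim (n m l : ℕ) (hn : 2 ≤ n) (hl : 1 ≤ l) (hlm : l ≤ m)
    (hm : 2 * m ≤ n) :
    Module.finrank ℂ
        (Submodule.span ℂ
          {f : VSet n m → ℂ | ∃ φ : Finset (Fin n) → ℂ, degenKer n l φ ∧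
            ∀ k : VSet n m, f k = ∑ i ∈ k.1.powersetCard l, φ i})
      = Nat.choose n l - Nat.choose n (l - 1) := by
  classical
  set K := Hoeff.Lk n l ⊓ LinearMap.ker (Hoeff.downM n) with hK
  have hset : {f : VSet n m → ℂ | ∃ φ : Finset (Fin n) → ℂ, degenKer n l φ ∧
        ∀ k : VSet n m, f k = ∑ i ∈ k.1.powersetCard l, φ i}
      = ↑(K.map (Hoeff.Tm n m l)) := by
    ext f
    simp only [Set.mem_setOf_eq, SetLike.mem_coe, Submodule.mem_map]
    constructor
    · rintro ⟨φ, hdeg, hf⟩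
      refine ⟨fun t => if t.card = l then φ t else 0, Submodule.mem_inf.mpr ⟨?_, ?_⟩, ?_⟩
      · intro s hs; exact if_neg hs
      · rw [LinearMap.mem_ker]
        funext j
        rw [Hoeff.downM_apply]
        simp only [Pi.zero_apply]
        by_cases hj : j.card = l - 1
        · have hco : ∀ a ∈ jᶜ,
              (if (insert a j).card = l then φ (insert a j) else 0) = φ (insert a j) := by
            intro a ha
            exact if_pos (by
              rw [Finset.card_insert_of_notMem (Finset.mem_compl.mp ha), hj]; omega)
          rw [Finset.sum_congr rfl hco]
          exact hdeg j hj
        · refine Finset.sum_eq_zero fun a ha => if_neg fun hE => hj ?_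
          rw [Finset.card_insert_of_notMem (Finset.mem_compl.mp ha)] at hE
          omega
      · funext k
        rw [Hoeff.Tm_apply, Hoeff.Jm_apply, hf k]
        refine Finset.sum_congr rfl fun i hi => if_pos (Finset.mem_powersetCard.mp hi).2
    · rintro ⟨g, hgK, rfl⟩
      obtain ⟨hg1, hg2⟩ := Submodule.mem_inf.mp hgK
      refine ⟨g, ?_, fun k => rfl⟩
      intro j hj
      have hz := congrFun (LinearMap.mem_ker.mp hg2) j
      rw [Hoeff.downM_apply] at hz
      simpa using hz
  rw [hset, Submodule.span_eq]
  have hinj : Function.Injective ((Hoeff.Tm n m l).comp K.subtype) := by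
    rw [← LinearMap.ker_eq_bot, LinearMap.ker_eq_bot']
    intro x hx
    have hx' : Hoeff.Tm n m l x.1 = 0 := hx
    refine Subtype.ext (Hoeff.J_vanish l x.1 (Submodule.mem_inf.mp x.2).1 (m - l)
      (by omega) fun t ht => ?_)
    have hzz : Hoeff.Tm n m l x.1 ⟨t, by omega⟩ = 0 := by rw [hx']; rfl
    rw [Hoeff.Tm_apply] at hzz
    exact hzz
  have hrange : K.map (Hoeff.Tm n m l) = LinearMap.range ((Hoeff.Tm n m l).comp K.subtype) := by
    rw [LinearMap.range_comp, Submodule.range_subtype]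
  rw [hrange, LinearMap.finrank_range_of_inj hinj]
  exact Hoeff.finrank_ker_down n l hl (by omega)
end

section
/- Let n ≥ 2 and 1 ≤ m ≤ n/2, and let X be a uniform random permutation of {1,...,n}. Suppose f and h are functions on m-subsets of {1,...,n} lying in distinct symmetric Hoeffding spaces W_j and W_l (1 ≤ j ≠ l ≤ m, as defined via completely degenerate kernels). Then for every injection κ: {1,...,m} → {1,...,n}, writing X'_{(m)} = {X(κ(1)),...,X(κ(m))}, one has E[f(X_{(m)}) · conj(h(X'_{(m)}))] = 0. -/
open Finset

section AuxOrtho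

variable {n : ℕ}


private lemma mem_c_block {u a b : Finset (Fin n)} {x : Fin n}
    (hu : x ∉ u) (ha : x ∉ a) (hb : x ∉ b) : x ∈ (u ∪ a ∪ b)ᶜ := by
  simp [Finset.mem_compl, Finset.mem_union, hu, ha, hb]

noncomputable def pmap (u a b u' a' b' : Finset (Fin n))
    (eu : ↥u ≃ ↥u') (ea : ↥a ≃ ↥a') (eb : ↥b ≃ ↥b')
    (ec : ↥((u ∪ a ∪ b)ᶜ : Finset (Fin n)) ≃ ↥((u' ∪ a' ∪ b')ᶜ : Finset (Fin n))) :
    Fin n → Fin n :=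
  fun x =>
    if h : x ∈ u then (eu ⟨x, h⟩ : Fin n)
    else if h2 : x ∈ a then (ea ⟨x, h2⟩ : Fin n)
    else if h3 : x ∈ b then (eb ⟨x, h3⟩ : Fin n)
    else (ec ⟨x, mem_c_block h h2 h3⟩ : Fin n)

lemma pmap_leftInverse (u a b u' a' b' : Finset (Fin n))
    (eu : ↥u ≃ ↥u') (ea : ↥a ≃ ↥a') (eb : ↥b ≃ ↥b')
    (ec : ↥((u ∪ a ∪ b)ᶜ : Finset (Fin n)) ≃ ↥((u' ∪ a' ∪ b')ᶜ : Finset (Fin n)))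
    (h1 : Disjoint u' a') (h2 : Disjoint u' b') (h3 : Disjoint a' b') :
    Function.LeftInverse
      (pmap u' a' b' u a b eu.symm ea.symm eb.symm ec.symm)
      (pmap u a b u' a' b' eu ea eb ec) := by
  intro x
  unfold pmap
  by_cases hu : x ∈ u
  · rw [dif_pos hu]
    have m1 : (eu ⟨x, hu⟩ : Fin n) ∈ u' := (eu ⟨x, hu⟩).2
    rw [dif_pos m1]
    simp
  · rw [dif_neg hu]
    by_cases ha : x ∈ a
    · rw [dif_pos ha]
      have m1 : (ea ⟨x, ha⟩ : Fin n) ∈ a' := (ea ⟨x, ha⟩).2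
      rw [dif_neg (Finset.disjoint_right.mp h1 m1), dif_pos m1]
      simp
    · rw [dif_neg ha]
      by_cases hb : x ∈ b
      · rw [dif_pos hb]
        have m1 : (eb ⟨x, hb⟩ : Fin n) ∈ b' := (eb ⟨x, hb⟩).2
        rw [dif_neg (Finset.disjoint_right.mp h2 m1), dif_neg (Finset.disjoint_right.mp h3 m1),
          dif_pos m1]
        simp
      · rw [dif_neg hb]
        have m1 : (ec ⟨x, mem_c_block hu ha hb⟩ : Fin n) ∈ (u' ∪ a' ∪ b')ᶜ :=
          (ec ⟨x, mem_c_block hu ha hb⟩).2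
        have m2 := Finset.mem_compl.mp m1
        simp only [Finset.mem_union, not_or] at m2
        rw [dif_neg m2.1.1, dif_neg m2.1.2, dif_neg m2.2]
        simp

lemma pmap_mem_u {u a b u' a' b' : Finset (Fin n)}
    {eu : ↥u ≃ ↥u'} {ea : ↥a ≃ ↥a'} {eb : ↥b ≃ ↥b'}
    {ec : ↥((u ∪ a ∪ b)ᶜ : Finset (Fin n)) ≃ ↥((u' ∪ a' ∪ b')ᶜ : Finset (Fin n))}
    {x : Fin n} (h : x ∈ u) : pmap u a b u' a' b' eu ea eb ec x ∈ u' := by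
  unfold pmap; rw [dif_pos h]; exact (eu ⟨x, h⟩).2

lemma pmap_mem_a {u a b u' a' b' : Finset (Fin n)}
    {eu : ↥u ≃ ↥u'} {ea : ↥a ≃ ↥a'} {eb : ↥b ≃ ↥b'}
    {ec : ↥((u ∪ a ∪ b)ᶜ : Finset (Fin n)) ≃ ↥((u' ∪ a' ∪ b')ᶜ : Finset (Fin n))}
    {x : Fin n} (h : x ∈ a) (hu : x ∉ u) : pmap u a b u' a' b' eu ea eb ec x ∈ a' := by
  unfold pmap; rw [dif_neg hu, dif_pos h]; exact (ea ⟨x, h⟩).2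

lemma pmap_mem_b {u a b u' a' b' : Finset (Fin n)}
    {eu : ↥u ≃ ↥u'} {ea : ↥a ≃ ↥a'} {eb : ↥b ≃ ↥b'}
    {ec : ↥((u ∪ a ∪ b)ᶜ : Finset (Fin n)) ≃ ↥((u' ∪ a' ∪ b')ᶜ : Finset (Fin n))}
    {x : Fin n} (h : x ∈ b) (hu : x ∉ u) (ha : x ∉ a) :
    pmap u a b u' a' b' eu ea eb ec x ∈ b' := by
  unfold pmap; rw [dif_neg hu, dif_neg ha, dif_pos h]; exact (eb ⟨x, h⟩).2

lemma exists_perm (s t s' t' : Finset (Fin n)) (hs : s.card = s'.card)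
    (ht : t.card = t'.card) (hst : (s ∩ t).card = (s' ∩ t').card) :
    ∃ π : Equiv.Perm (Fin n), s.image π = s' ∧ t.image π = t' := by
  classical
  obtain ⟨u, a, b, u', a', b', hu, ha, hb, hu', ha', hb'⟩ :
      ∃ u a b u' a' b' : Finset (Fin n), u = s ∩ t ∧ a = s \ t ∧ b = t \ s ∧
        u' = s' ∩ t' ∧ a' = s' \ t' ∧ b' = t' \ s' :=
    ⟨_, _, _, _, _, _, rfl, rfl, rfl, rfl, rfl, rfl⟩
  have hst' : u.card = u'.card := by rw [hu, hu']; exact hst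
  have hca : a.card = a'.card := by
    rw [ha, ha', ← Finset.sdiff_inter_self_left s t, ← Finset.sdiff_inter_self_left s' t',
      Finset.card_sdiff_of_subset Finset.inter_subset_left, Finset.card_sdiff_of_subset Finset.inter_subset_left,
      hs, hst]
  have hcb : b.card = b'.card := by
    rw [hb, hb', ← Finset.sdiff_inter_self_left t s, ← Finset.sdiff_inter_self_left t' s',
      Finset.card_sdiff_of_subset Finset.inter_subset_left, Finset.card_sdiff_of_subset Finset.inter_subset_left,
      ht, Finset.inter_comm, hst, Finset.inter_comm t' s']
  have hcc : ((u ∪ a ∪ b)ᶜ : Finset (Fin n)).card = ((u' ∪ a' ∪ b')ᶜ : Finset (Fin n)).card := by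
    rw [Finset.card_compl, Finset.card_compl]
    congr 1
    have e1 : u ∪ a ∪ b = s ∪ t := by
      rw [hu, ha, hb]; ext x
      simp only [Finset.mem_union, Finset.mem_inter, Finset.mem_sdiff]; tauto
    have e2 : u' ∪ a' ∪ b' = s' ∪ t' := by
      rw [hu', ha', hb']; ext x
      simp only [Finset.mem_union, Finset.mem_inter, Finset.mem_sdiff]; tauto
    rw [e1, e2]
    have g1 := Finset.card_union_add_card_inter s t
    have g2 := Finset.card_union_add_card_inter s' t'
    omega
  have eu : ↥u ≃ ↥u' := Finset.equivOfCardEq hst'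
  have ea' : ↥a ≃ ↥a' := Finset.equivOfCardEq hca
  have eb' : ↥b ≃ ↥b' := Finset.equivOfCardEq hcb
  have ec : ↥((u ∪ a ∪ b)ᶜ : Finset (Fin n)) ≃ ↥((u' ∪ a' ∪ b')ᶜ : Finset (Fin n)) :=
    Finset.equivOfCardEq hcc
  have hd1 : ∀ (p q : Finset (Fin n)), Disjoint (p ∩ q) (p \ q) := fun p q =>
    Finset.disjoint_left.mpr (fun x hx hx2 => (Finset.mem_sdiff.mp hx2).2 (Finset.mem_inter.mp hx).2)
  have hd2 : ∀ (p q : Finset (Fin n)), Disjoint (p ∩ q) (q \ p) := fun p q =>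
    Finset.disjoint_left.mpr (fun x hx hx2 => (Finset.mem_sdiff.mp hx2).2 (Finset.mem_inter.mp hx).1)
  have hd3 : ∀ (p q : Finset (Fin n)), Disjoint (p \ q) (q \ p) := fun p q =>
    Finset.disjoint_left.mpr (fun x hx hx2 => (Finset.mem_sdiff.mp hx).2 (Finset.mem_sdiff.mp hx2).1)
  let π : Equiv.Perm (Fin n) :=
    { toFun := pmap u a b u' a' b' eu ea' eb' ec
      invFun := pmap u' a' b' u a b eu.symm ea'.symm eb'.symm ec.symm
      left_inv := pmap_leftInverse u a b u' a' b' eu ea' eb' ec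
        (by rw [hu', ha']; exact hd1 s' t') (by rw [hu', hb']; exact hd2 s' t')
        (by rw [ha', hb']; exact hd3 s' t')
      right_inv := by
        have := pmap_leftInverse u' a' b' u a b eu.symm ea'.symm eb'.symm ec.symm
          (by rw [hu, ha]; exact hd1 s t) (by rw [hu, hb]; exact hd2 s t)
          (by rw [ha, hb]; exact hd3 s t)
        exact this }
  refine ⟨π, ?_, ?_⟩
  · apply Finset.eq_of_subset_of_card_le
    · intro y hy
      obtain ⟨x, hx, rfl⟩ := Finset.mem_image.mp hy
      by_cases hxt : x ∈ t
      · have hxu : x ∈ u := by rw [hu]; exact Finset.mem_inter.mpr ⟨hx, hxt⟩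
        have := pmap_mem_u (u := u) (a := a) (b := b) (eu := eu) (ea := ea') (eb := eb') (ec := ec) hxu
        have h5 : π x ∈ s' ∩ t' := by rw [← hu']; exact this
        exact Finset.mem_of_mem_inter_left h5
      · have hxa : x ∈ a := by rw [ha]; exact Finset.mem_sdiff.mpr ⟨hx, hxt⟩
        have hxu : x ∉ u := by rw [hu]; exact fun hc => hxt (Finset.mem_inter.mp hc).2
        have := pmap_mem_a (u := u) (b := b) (u' := u') (eu := eu) (ea := ea') (eb := eb') (ec := ec) hxa hxu
        have h5 : π x ∈ s' \ t' := by rw [← ha']; exact this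
        exact (Finset.mem_sdiff.mp h5).1
    · rw [Finset.card_image_of_injective _ π.injective, hs]
  · apply Finset.eq_of_subset_of_card_le
    · intro y hy
      obtain ⟨x, hx, rfl⟩ := Finset.mem_image.mp hy
      by_cases hxs : x ∈ s
      · have hxu : x ∈ u := by rw [hu]; exact Finset.mem_inter.mpr ⟨hxs, hx⟩
        have := pmap_mem_u (u := u) (a := a) (b := b) (eu := eu) (ea := ea') (eb := eb') (ec := ec) hxu
        have h5 : π x ∈ s' ∩ t' := by rw [← hu']; exact this
        exact Finset.mem_of_mem_inter_right h5
      · have hxb : x ∈ b := by rw [hb]; exact Finset.mem_sdiff.mpr ⟨hx, hxs⟩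
        have hxu : x ∉ u := by rw [hu]; exact fun hc => hxs (Finset.mem_inter.mp hc).1
        have hxa : x ∉ a := by rw [ha]; exact fun hc => hxs (Finset.mem_sdiff.mp hc).1
        have := pmap_mem_b (u := u) (a := a) (a' := a') (eu := eu) (ea := ea') (eb := eb') (ec := ec) hxb hxu hxa
        have h5 : π x ∈ t' \ s' := by rw [← hb']; exact this
        exact (Finset.mem_sdiff.mp h5).1
    · rw [Finset.card_image_of_injective _ π.injective, ht]

noncomputable def Ncnt (A B i i' : Finset (Fin n)) : ℕ :=
  (Finset.univ.filter fun x : Equiv.Perm (Fin n) =>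
    i ⊆ A.image ⇑x ∧ i' ⊆ B.image ⇑x).card

lemma Ncnt_perm (A B i i' : Finset (Fin n)) (π : Equiv.Perm (Fin n)) :
    Ncnt A B i i' = Ncnt A B (i.image ⇑π) (i'.image ⇑π) := by
  classical
  unfold Ncnt
  have key : ∀ (K s : Finset (Fin n)) (x : Equiv.Perm (Fin n)),
      s ⊆ K.image ⇑x ↔ s.image ⇑π ⊆ K.image ⇑(π * x) := by
    intro K s x
    have h1 : K.image ⇑(π * x) = (K.image ⇑x).image ⇑π := by
      rw [Finset.image_image]; rfl
    rw [h1, Finset.image_subset_image_iff π.injective]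
  apply Finset.card_bij' (fun x _ => π * x) (fun y _ => π⁻¹ * y)
  · intro x hx
    simp only [Finset.mem_filter, Finset.mem_univ, true_and] at hx ⊢
    exact ⟨(key A i x).mp hx.1, (key B i' x).mp hx.2⟩
  · intro y hy
    simp only [Finset.mem_filter, Finset.mem_univ, true_and] at hy ⊢
    have h1 := (key A i (π⁻¹ * y)).symm
    have h2 := (key B i' (π⁻¹ * y)).symm
    rw [mul_inv_cancel_left] at h1 h2
    exact ⟨h1.mp hy.1, h2.mp hy.2⟩
  · intro x _; group
  · intro y _; group

lemma Ncnt_inv (A B i i' i₀ i₀' : Finset (Fin n)) (h1 : i.card = i₀.card)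
    (h2 : i'.card = i₀'.card) (h3 : (i ∩ i').card = (i₀ ∩ i₀').card) :
    Ncnt A B i i' = Ncnt A B i₀ i₀' := by
  obtain ⟨π, hπ1, hπ2⟩ := exists_perm i i' i₀ i₀' h1 h2 h3
  rw [Ncnt_perm A B i i' π, hπ1, hπ2]

lemma deg_sum {j : ℕ} (φ : Finset (Fin n) → ℂ) (hφ : degenKer n j φ)
    (s : Finset (Fin n)) (hs : s.card < j) :
    ∑ i ∈ ((Finset.univ : Finset (Fin n)).powersetCard j).filter (fun i => s ⊆ i), φ i = 0 := by
  classical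
  have key : ∀ d : ℕ, ∀ s : Finset (Fin n), s.card < j → j - s.card ≤ d →
      ∑ i ∈ ((Finset.univ : Finset (Fin n)).powersetCard j).filter (fun i => s ⊆ i), φ i = 0 := by
    intro d
    induction d with
    | zero => intro s hs h0; omega
    | succ d IH =>
      intro s hs hd
      have hswap : ∑ a ∈ sᶜ,
          (∑ i ∈ ((Finset.univ : Finset (Fin n)).powersetCard j).filter
            (fun i => insert a s ⊆ i), φ i)
          = ((j - s.card : ℕ) : ℂ) *
            ∑ i ∈ ((Finset.univ : Finset (Fin n)).powersetCard j).filter (fun i => s ⊆ i), φ i := by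
        have inner : ∀ i ∈ (Finset.univ : Finset (Fin n)).powersetCard j,
            ∑ a ∈ sᶜ, (if insert a s ⊆ i then φ i else 0)
              = (if s ⊆ i then ((j - s.card : ℕ) : ℂ) * φ i else 0) := by
          intro i hi
          by_cases hsi : s ⊆ i
          · rw [if_pos hsi, ← Finset.sum_filter]
            have hfe : sᶜ.filter (fun a => insert a s ⊆ i) = i \ s := by
              ext a
              simp only [Finset.mem_filter, Finset.mem_compl, Finset.mem_sdiff,
                Finset.insert_subset_iff, hsi, and_true]
              tauto
            rw [hfe, Finset.sum_const, nsmul_eq_mul]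
            congr 2
            rw [Finset.card_sdiff_of_subset hsi, (Finset.mem_powersetCard.mp hi).2]
          · rw [if_neg hsi]
            apply Finset.sum_eq_zero
            intro a _
            rw [if_neg]
            intro hcon
            exact hsi ((Finset.subset_insert a s).trans hcon)
        calc ∑ a ∈ sᶜ, (∑ i ∈ ((Finset.univ : Finset (Fin n)).powersetCard j).filter
              (fun i => insert a s ⊆ i), φ i)
            = ∑ a ∈ sᶜ, ∑ i ∈ (Finset.univ : Finset (Fin n)).powersetCard j,
                (if insert a s ⊆ i then φ i else 0) := by
              apply Finset.sum_congr rfl; intro a _; rw [Finset.sum_filter]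
          _ = ∑ i ∈ (Finset.univ : Finset (Fin n)).powersetCard j,
                ∑ a ∈ sᶜ, (if insert a s ⊆ i then φ i else 0) := Finset.sum_comm
          _ = ∑ i ∈ (Finset.univ : Finset (Fin n)).powersetCard j,
                (if s ⊆ i then ((j - s.card : ℕ) : ℂ) * φ i else 0) :=
              Finset.sum_congr rfl inner
          _ = ((j - s.card : ℕ) : ℂ) *
              ∑ i ∈ ((Finset.univ : Finset (Fin n)).powersetCard j).filter (fun i => s ⊆ i), φ i := by
              rw [← Finset.sum_filter, Finset.mul_sum]
      have hz : ∑ a ∈ sᶜ,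
          (∑ i ∈ ((Finset.univ : Finset (Fin n)).powersetCard j).filter
            (fun i => insert a s ⊆ i), φ i) = 0 := by
        by_cases hcase : s.card + 1 = j
        · have heach : ∀ a ∈ sᶜ,
              (∑ i ∈ ((Finset.univ : Finset (Fin n)).powersetCard j).filter
                (fun i => insert a s ⊆ i), φ i) = φ (insert a s) := by
            intro a ha
            have hans : a ∉ s := Finset.mem_compl.mp ha
            have hcard : (insert a s).card = j := by
              rw [Finset.card_insert_of_notMem hans, hcase]
            have hfe : ((Finset.univ : Finset (Fin n)).powersetCard j).filter
                (fun i => insert a s ⊆ i) = {insert a s} := by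
              ext i
              simp only [Finset.mem_filter, Finset.mem_powersetCard, Finset.subset_univ,
                true_and, Finset.mem_singleton]
              constructor
              · rintro ⟨hic, hsub⟩
                exact (Finset.eq_of_subset_of_card_le hsub (by omega)).symm
              · rintro rfl; exact ⟨hcard, Finset.Subset.refl _⟩
            rw [hfe, Finset.sum_singleton]
          rw [Finset.sum_congr rfl heach]
          exact hφ s (by omega)
        · apply Finset.sum_eq_zero
          intro a ha
          have hans : a ∉ s := Finset.mem_compl.mp ha
          have hcard : (insert a s).card = s.card + 1 := Finset.card_insert_of_notMem hans
          exact IH (insert a s) (by omega) (by omega)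
      rw [hz] at hswap
      have hne : ((j - s.card : ℕ) : ℂ) ≠ 0 := by
        simp only [ne_eq, Nat.cast_eq_zero]
        omega
      exact (mul_eq_zero.mp hswap.symm).resolve_left hne
  exact key (j - s.card) s hs le_rfl

lemma prod_zero {j l : ℕ} (hj : 1 ≤ j) (hl : 1 ≤ l) (hjl : j ≠ l)
    (φ ψ : Finset (Fin n) → ℂ) (hφ : degenKer n j φ) (hψ : degenKer n l ψ)
    (s : Finset (Fin n)) :
    (∑ i ∈ ((Finset.univ : Finset (Fin n)).powersetCard j).filter (fun i => s ⊆ i), φ i) *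
      (starRingEnd ℂ)
        (∑ i ∈ ((Finset.univ : Finset (Fin n)).powersetCard l).filter (fun i => s ⊆ i), ψ i)
      = 0 := by
  classical
  have hempty : ∀ (k : ℕ) (θ : Finset (Fin n) → ℂ), k < s.card →
      ∑ i ∈ ((Finset.univ : Finset (Fin n)).powersetCard k).filter (fun i => s ⊆ i), θ i = 0 := by
    intro k θ hk
    rw [Finset.filter_eq_empty_iff.mpr, Finset.sum_empty]
    intro i hi hcon
    have := Finset.card_le_card hcon
    rw [(Finset.mem_powersetCard.mp hi).2] at this
    omega
  rcases lt_trichotomy s.card j with h | h | h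
  · rw [deg_sum φ hφ s h, zero_mul]
  · rcases lt_trichotomy s.card l with h2 | h2 | h2
    · rw [deg_sum ψ hψ s h2, map_zero, mul_zero]
    · omega
    · rw [hempty l ψ h2, map_zero, mul_zero]
  · rw [hempty j φ h, zero_mul]

noncomputable def invSeq (ν : ℕ → ℂ) : ℕ → ℂ
  | r => ν r - ∑ k ∈ (Finset.range r).attach, ((r.choose k.1 : ℕ) : ℂ) * invSeq ν k.1
decreasing_by exact Finset.mem_range.mp k.2

lemma invSeq_sum (ν : ℕ → ℂ) (r : ℕ) :
    ∑ k ∈ Finset.range (r + 1), ((r.choose k : ℕ) : ℂ) * invSeq ν k = ν r := by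
  rw [Finset.sum_range_succ, Nat.choose_self, invSeq]
  rw [Finset.sum_attach (Finset.range r) (fun k => ((r.choose k : ℕ) : ℂ) * invSeq ν k)]
  push_cast
  ring

lemma aux_main (j l : ℕ) (hj : 1 ≤ j) (hl : 1 ≤ l) (hjl : j ≠ l)
    (φ ψ : Finset (Fin n) → ℂ) (hφ : degenKer n j φ) (hψ : degenKer n l ψ)
    (A B : Finset (Fin n)) :
    ∑ x : Equiv.Perm (Fin n),
      (∑ i ∈ (A.image ⇑x).powersetCard j, φ i) *
        (starRingEnd ℂ) (∑ i ∈ (B.image ⇑x).powersetCard l, ψ i) = 0 := by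
  classical
  -- step 1: restrict powersetCard sums to the universal powersetCard with indicator
  have step1 : ∀ (K : Finset (Fin n)) (k : ℕ) (θ : Finset (Fin n) → ℂ),
      ∑ i ∈ K.powersetCard k, θ i
        = ∑ i ∈ (Finset.univ : Finset (Fin n)).powersetCard k, (if i ⊆ K then θ i else 0) := by
    intro K k θ
    rw [← Finset.sum_filter]
    apply Finset.sum_congr _ (fun _ _ => rfl)
    ext i
    simp only [Finset.mem_powersetCard, Finset.mem_filter, Finset.subset_univ, true_and]
    tauto
  -- the binomial-inverted weights
  set ν : ℕ → ℂ := fun r =>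
    if h : ∃ p : Finset (Fin n) × Finset (Fin n),
        p.1.card = j ∧ p.2.card = l ∧ (p.1 ∩ p.2).card = r
    then (Ncnt A B h.choose.1 h.choose.2 : ℂ) else 0 with hνdef
  have hν : ∀ i i' : Finset (Fin n), i.card = j → i'.card = l →
      (Ncnt A B i i' : ℂ) = ν ((i ∩ i').card) := by
    intro i i' hi hi'
    have hex : ∃ p : Finset (Fin n) × Finset (Fin n),
        p.1.card = j ∧ p.2.card = l ∧ (p.1 ∩ p.2).card = (i ∩ i').card :=
      ⟨(i, i'), hi, hi', rfl⟩
    rw [hνdef]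
    simp only
    rw [dif_pos hex]
    obtain ⟨h1, h2, h3⟩ := hex.choose_spec
    have := Ncnt_inv A B i i' hex.choose.1 hex.choose.2 (hi.trans h1.symm)
      (hi'.trans h2.symm) h3.symm
    exact_mod_cast this
  have hNsum : ∀ i i' : Finset (Fin n), i.card = j → i'.card = l →
      (Ncnt A B i i' : ℂ) = ∑ s ∈ (i ∩ i').powerset, invSeq ν s.card := by
    intro i i' hi hi'
    rw [hν i i' hi hi', Finset.sum_powerset_apply_card (invSeq ν),
      ← invSeq_sum ν ((i ∩ i').card)]
    apply Finset.sum_congr rfl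
    intro k _
    rw [nsmul_eq_mul]
  calc ∑ x : Equiv.Perm (Fin n),
        (∑ i ∈ (A.image ⇑x).powersetCard j, φ i) *
          (starRingEnd ℂ) (∑ i ∈ (B.image ⇑x).powersetCard l, ψ i)
      = ∑ x : Equiv.Perm (Fin n),
          ∑ i ∈ (Finset.univ : Finset (Fin n)).powersetCard j,
            ∑ i' ∈ (Finset.univ : Finset (Fin n)).powersetCard l,
              (if i ⊆ A.image ⇑x ∧ i' ⊆ B.image ⇑x then φ i * (starRingEnd ℂ) (ψ i') else 0) := by
        apply Finset.sum_congr rfl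
        intro x _
        rw [step1 (A.image ⇑x) j φ, step1 (B.image ⇑x) l ψ, map_sum, Finset.sum_mul_sum]
        apply Finset.sum_congr rfl; intro i _
        apply Finset.sum_congr rfl; intro i' _
        rw [apply_ite (starRingEnd ℂ), map_zero]
        by_cases h1 : i ⊆ A.image ⇑x <;> by_cases h2 : i' ⊆ B.image ⇑x <;>
          simp [h1, h2]
    _ = ∑ i ∈ (Finset.univ : Finset (Fin n)).powersetCard j,
          ∑ i' ∈ (Finset.univ : Finset (Fin n)).powersetCard l,
            (φ i * (starRingEnd ℂ) (ψ i')) * (Ncnt A B i i' : ℂ) := by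
        rw [Finset.sum_comm]
        apply Finset.sum_congr rfl; intro i _
        rw [Finset.sum_comm]
        apply Finset.sum_congr rfl; intro i' _
        rw [← Finset.sum_filter, Finset.sum_const, nsmul_eq_mul, mul_comm]
        rfl
    _ = ∑ i ∈ (Finset.univ : Finset (Fin n)).powersetCard j,
          ∑ i' ∈ (Finset.univ : Finset (Fin n)).powersetCard l,
            ∑ s ∈ (Finset.univ : Finset (Fin n)).powerset,
              (if s ⊆ i ∧ s ⊆ i' then (φ i * (starRingEnd ℂ) (ψ i')) * invSeq ν s.card else 0) := by
        apply Finset.sum_congr rfl; intro i hi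
        apply Finset.sum_congr rfl; intro i' hi'
        rw [hNsum i i' (Finset.mem_powersetCard.mp hi).2 (Finset.mem_powersetCard.mp hi').2,
          Finset.mul_sum]
        rw [← Finset.sum_filter]
        apply Finset.sum_congr _ (fun _ _ => rfl)
        ext s
        simp only [Finset.mem_powerset, Finset.mem_filter, Finset.subset_univ, true_and,
          Finset.subset_inter_iff]
    _ = ∑ s ∈ (Finset.univ : Finset (Fin n)).powerset,
          ∑ i ∈ (Finset.univ : Finset (Fin n)).powersetCard j,
            ∑ i' ∈ (Finset.univ : Finset (Fin n)).powersetCard l,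
              (if s ⊆ i ∧ s ⊆ i' then (φ i * (starRingEnd ℂ) (ψ i')) * invSeq ν s.card else 0) := by
        have e1 : ∀ i ∈ (Finset.univ : Finset (Fin n)).powersetCard j,
            ∑ i' ∈ (Finset.univ : Finset (Fin n)).powersetCard l,
              ∑ s ∈ (Finset.univ : Finset (Fin n)).powerset,
                (if s ⊆ i ∧ s ⊆ i' then (φ i * (starRingEnd ℂ) (ψ i')) * invSeq ν s.card else 0)
            = ∑ s ∈ (Finset.univ : Finset (Fin n)).powerset,
                ∑ i' ∈ (Finset.univ : Finset (Fin n)).powersetCard l,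
                  (if s ⊆ i ∧ s ⊆ i' then (φ i * (starRingEnd ℂ) (ψ i')) * invSeq ν s.card else 0) :=
          fun i _ => Finset.sum_comm
        rw [Finset.sum_congr rfl e1, Finset.sum_comm]
    _ = 0 := by
        apply Finset.sum_eq_zero
        intro s _
        have h0 := prod_zero hj hl hjl φ ψ hφ hψ s
        calc ∑ i ∈ (Finset.univ : Finset (Fin n)).powersetCard j,
              ∑ i' ∈ (Finset.univ : Finset (Fin n)).powersetCard l,
                (if s ⊆ i ∧ s ⊆ i' then (φ i * (starRingEnd ℂ) (ψ i')) * invSeq ν s.card else 0)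
            = ((∑ i ∈ ((Finset.univ : Finset (Fin n)).powersetCard j).filter (fun i => s ⊆ i), φ i) *
                (starRingEnd ℂ)
                  (∑ i ∈ ((Finset.univ : Finset (Fin n)).powersetCard l).filter (fun i => s ⊆ i), ψ i))
                * invSeq ν s.card := by
              rw [map_sum, Finset.sum_filter, Finset.sum_filter, Finset.sum_mul_sum,
                Finset.sum_mul]
              apply Finset.sum_congr rfl; intro i _
              rw [Finset.sum_mul]
              apply Finset.sum_congr rfl; intro i' _
              by_cases h1 : s ⊆ i <;> by_cases h2 : s ⊆ i' <;> simp [h1, h2]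
          _ = 0 := by rw [h0, zero_mul]

end AuxOrtho

/-- Symmetric `U`-statistics `f(X_{(m)})`, `h(X'_{(m)})` with completely degenerate
kernels of distinct orders `j ≠ l` stay orthogonal after shifting the argument of
the second one to an arbitrary `m`-subset of indices: with `κ : {1,...,m} → {1,...,n}`
injective and `X'_{(m)} = {X(κ(1)),...,X(κ(m))}`, one has
`E[f(X_{(m)}) conj(h(X'_{(m)}))] = 0`. -/
theorem shifted_orthogonality_of_hoeffding_spaces (n m j l : ℕ) (hn : 2 ≤ n)
    (hm1 : 1 ≤ m) (hm : 2 * m ≤ n)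
    (hj : 1 ≤ j) (hl : 1 ≤ l) (hjm : j ≤ m) (hlm : l ≤ m) (hjl : j ≠ l)
    (φ ψ : Finset (Fin n) → ℂ) (hφ : degenKer n j φ) (hψ : degenKer n l ψ)
    (κ : Fin m → Fin n) (hκ : Function.Injective κ) :
    Eperm n (fun x =>
        (∑ i ∈ ((firstSet n m (by omega)).1.image x).powersetCard j, φ i) *
          (starRingEnd ℂ)
            (∑ i ∈ (((Finset.univ : Finset (Fin m)).image κ).image x).powersetCard l,
              ψ i)) = 0 := by
  have h := aux_main j l hj hl hjl φ ψ hφ hψ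
    ((firstSet n m (by omega)).1) ((Finset.univ : Finset (Fin m)).image κ)
  unfold Eperm
  rw [h, zero_div]
end
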